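/- arXiv:1803.09186 — 2 statements merged into one kernel-verified Lean document; each statement's English description precedes it below -/
import Mathlib

section
/- Suppose the system response Θ̃ = {R̃, M̃, Ñ, L̃} satisfies the robust SLS constraints for the plant (A, B₂, C₂) with perturbations (Δ₁, Δ₂), and suppose (I + Δ₁)⁻¹ exists and belongs to RH∞. Define Θ̂ = {R̂, M̂, N̂, L̂} by R̂ = (I + Δ₁)⁻¹R̃, M̂ = M̃ − Δ₂(I + Δ₁)⁻¹R̃, N̂ = (I + Δ₁)⁻¹Ñ, L̂ = L̃ − Δ₂(I + Δ₁)⁻¹Ñ. Then Θ̂ satisfies the SLS constraints for (A, B₂, C₂). -/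
/- Preliminaries: transfer functions as real rational functions, RH∞, H∞ norms,
   System-Level Synthesis (SLS) constraints, controllers, closed-loop responses,
   coarse-grained identification, Gaussian vectors. -/

noncomputable section
open scoped Matrix BigOperators ENNReal
open MeasureTheory ProbabilityTheory Polynomial

namespace SLS

/-- Scalar transfer functions: real rational functions in `z`. -/
abbrev TF : Type := RatFunc ℝ

/-- Transfer matrices. -/
abbrev TMat (m n : ℕ) : Type := Matrix (Fin m) (Fin n) TF

/-- Embed a real matrix as a (constant) transfer matrix. -/
def rmap {m n : ℕ} (A : Matrix (Fin m) (Fin n) ℝ) : TMat m n := A.map RatFunc.C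

/-- Evaluate a scalar transfer function at a complex point. -/
def evalTF (f : TF) (z : ℂ) : ℂ :=
  (f.num.map (algebraMap ℝ ℂ)).eval z / (f.denom.map (algebraMap ℝ ℂ)).eval z

/-- Evaluate a transfer matrix at a complex point. -/
def evalMat {m n : ℕ} (F : TMat m n) (z : ℂ) : Matrix (Fin m) (Fin n) ℂ :=
  Matrix.of fun i j => evalTF (F i j) z

/-- Spectral norm (ℓ2 → ℓ2 operator norm) of a matrix over `ℝ` or `ℂ`. -/
def specNorm {𝕜 : Type} [RCLike 𝕜] {m n : ℕ} (M : Matrix (Fin m) (Fin n) 𝕜) : ℝ :=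
  ‖LinearMap.toContinuousLinearMap (Matrix.toEuclideanLin M)‖

/-- H∞ norm of a transfer matrix: sup over the unit circle of the spectral norm. -/
def hinfNorm {m n : ℕ} (F : TMat m n) : ℝ :=
  sSup {x : ℝ | ∃ z : ℂ, ‖z‖ = 1 ∧ x = specNorm (evalMat F z)}

/-- H∞ norm of a scalar transfer function. -/
def hinfNormTF (f : TF) : ℝ :=
  sSup {x : ℝ | ∃ z : ℂ, ‖z‖ = 1 ∧ x = ‖evalTF f z‖}

/-- A scalar transfer function is proper if its numerator degree does not exceed
its denominator degree. -/
def ProperTF (f : TF) : Prop := f.num.degree ≤ f.denom.degree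

/-- Strictly proper: vanishes at `z = ∞`. -/
def StrictlyProperTF (f : TF) : Prop := f.num.degree < f.denom.degree

/-- Stable: all poles lie strictly inside the open unit disk. -/
def StableTF (f : TF) : Prop :=
  ∀ z : ℂ, (f.denom.map (algebraMap ℝ ℂ)).eval z = 0 → ‖z‖ < 1

/-- Membership in RH∞ for scalar transfer functions: proper and stable. -/
def MemRHinfTF (f : TF) : Prop := ProperTF f ∧ StableTF f

/-- Membership in RH∞ for transfer matrices (entrywise). -/
def MemRHinf {m n : ℕ} (F : TMat m n) : Prop := ∀ i j, MemRHinfTF (F i j)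

/-- Strict properness of a transfer matrix (entrywise). -/
def StrictlyProper {m n : ℕ} (F : TMat m n) : Prop := ∀ i j, StrictlyProperTF (F i j)

/-- The transfer matrix `zI - A` for a real matrix `A`. -/
def zIA {n : ℕ} (A : Matrix (Fin n) (Fin n) ℝ) : TMat n n :=
  Matrix.diagonal (fun _ => (RatFunc.X : TF)) - rmap A

/-- A system response `Θ = {R, M, N, L}` for a plant with `n` states, `p` control
inputs and `q` measured outputs. -/
structure Response (n p q : ℕ) where
  R : TMat n n
  M : TMat p n
  N : TMat n q
  L : TMat p q

/-- The stability part of the SLS constraints: `R, M, N` strictly proper in RH∞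
and `L ∈ RH∞`. -/
def SLSStable {n p q : ℕ} (Θ : Response n p q) : Prop :=
  StrictlyProper Θ.R ∧ StrictlyProper Θ.M ∧ StrictlyProper Θ.N ∧
  MemRHinf Θ.R ∧ MemRHinf Θ.M ∧ MemRHinf Θ.N ∧ MemRHinf Θ.L

/-- The SLS constraints for the plant `(A, B₂, C₂)`:
`[zI − A, −B₂]·[[R, N],[M, L]] = [I, 0]`, `[[R, N],[M, L]]·[zI − A; −C₂] = [I; 0]`,
written blockwise, together with the stability conditions. -/
def SLSConstraints {n p q : ℕ} (A : Matrix (Fin n) (Fin n) ℝ)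
    (B₂ : Matrix (Fin n) (Fin p) ℝ) (C₂ : Matrix (Fin q) (Fin n) ℝ)
    (Θ : Response n p q) : Prop :=
  zIA A * Θ.R - rmap B₂ * Θ.M = 1 ∧
  zIA A * Θ.N - rmap B₂ * Θ.L = 0 ∧
  Θ.R * zIA A - Θ.N * rmap C₂ = 1 ∧
  Θ.M * zIA A - Θ.L * rmap C₂ = 0 ∧
  SLSStable Θ

/-- The robust SLS constraints with perturbations `(Δ₁, Δ₂)`: the second block
equation becomes `[[R, N],[M, L]]·[zI − A; −C₂] = [I + Δ₁; Δ₂]`. -/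
def RobustSLSConstraints {n p q : ℕ} (A : Matrix (Fin n) (Fin n) ℝ)
    (B₂ : Matrix (Fin n) (Fin p) ℝ) (C₂ : Matrix (Fin q) (Fin n) ℝ)
    (Δ₁ : TMat n n) (Δ₂ : TMat p n) (Θ : Response n p q) : Prop :=
  zIA A * Θ.R - rmap B₂ * Θ.M = 1 ∧
  zIA A * Θ.N - rmap B₂ * Θ.L = 0 ∧
  Θ.R * zIA A - Θ.N * rmap C₂ = 1 + Δ₁ ∧
  Θ.M * zIA A - Θ.L * rmap C₂ = Δ₂ ∧
  SLSStable Θ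

/-- The controller `K = L − M R⁻¹ N` induced by a system response. -/
def controller {n p q : ℕ} (Θ : Response n p q) : TMat p q :=
  Θ.L - Θ.M * Θ.R⁻¹ * Θ.N

/-- `K` achieves the closed-loop response `Θ'` on the plant `(A, B₂, C₂)`: in the
feedback loop `x = (zI − A)⁻¹(B₂u + δx)`, `y = C₂x + δy`, `u = Ky`, the transfer
matrices from `(δx, δy)` to `(x, u)` equal `[[R', N'],[M', L']]`. -/
def Achieves {n p q : ℕ} (A : Matrix (Fin n) (Fin n) ℝ)
    (B₂ : Matrix (Fin n) (Fin p) ℝ) (C₂ : Matrix (Fin q) (Fin n) ℝ)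
    (K : TMat p q) (Θ' : Response n p q) : Prop :=
  zIA A * Θ'.R = rmap B₂ * Θ'.M + 1 ∧
  zIA A * Θ'.N = rmap B₂ * Θ'.L ∧
  Θ'.M = K * rmap C₂ * Θ'.R ∧
  Θ'.L = K * rmap C₂ * Θ'.N + K

/-- `K` internally stabilizes the plant `(A, B₂, C₂)`: the four closed-loop
transfer matrices exist, `R', M', N'` are strictly proper, and all four lie in RH∞. -/
def InternallyStabilizes {n p q : ℕ} (A : Matrix (Fin n) (Fin n) ℝ)
    (B₂ : Matrix (Fin n) (Fin p) ℝ) (C₂ : Matrix (Fin q) (Fin n) ℝ)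
    (K : TMat p q) : Prop :=
  ∃ Θ' : Response n p q, Achieves A B₂ C₂ K Θ' ∧ SLSStable Θ'

/-! ### FIR SISO plants -/

/-- The down-shift matrix (ones on the subdiagonal). -/
def shiftMat (n : ℕ) : Matrix (Fin n) (Fin n) ℝ :=
  Matrix.of fun i j => if (i : ℕ) = (j : ℕ) + 1 then 1 else 0

/-- The first standard basis vector, as a column matrix. -/
def e1 (n : ℕ) : Matrix (Fin n) (Fin 1) ℝ :=
  Matrix.of fun i _ => if (i : ℕ) = 0 then 1 else 0

/-- A vector as a row matrix (`gᵀ`). -/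
def rowVec {n : ℕ} (g : Fin n → ℝ) : Matrix (Fin 1) (Fin n) ℝ :=
  Matrix.of fun _ j => g j

/-- The matrix `C₁ = [gᵀ; 0]`. -/
def C1mat {n : ℕ} (g : Fin n → ℝ) : Matrix (Fin 2) (Fin n) ℝ :=
  Matrix.of fun i j => if (i : ℕ) = 0 then g j else 0

/-- The matrix `D₁₂ = [0; 1]`. -/
def D12mat : Matrix (Fin 2) (Fin 1) ℝ :=
  Matrix.of fun i _ => if (i : ℕ) = 1 then 1 else 0

/-- Stack two scalar transfer functions into a 2×1 transfer matrix `[a; b]`. -/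
def col2 (a b : TF) : TMat 2 1 :=
  Matrix.of fun i _ => if (i : ℕ) = 0 then a else b

/-- The H∞ cost `J(g, Θ) = ‖[C₁, D₁₂]·[[R, N],[M, L]]·[B₁; D₂₁] + D₁₁‖` of a
system response for the generalized plant built from FIR coefficients `g`. -/
def cost {n nw : ℕ} (g : Fin n → ℝ) (B₁ : Matrix (Fin n) (Fin nw) ℝ)
    (D₂₁ : Matrix (Fin 1) (Fin nw) ℝ) (D₁₁ : Matrix (Fin 2) (Fin nw) ℝ)
    (Θ : Response n 1 1) : ℝ :=
  hinfNorm ((rmap (C1mat g) * Θ.R + rmap D12mat * Θ.M) * rmap B₁ +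
    (rmap (C1mat g) * Θ.N + rmap D12mat * Θ.L) * rmap D₂₁ + rmap D₁₁)

/-- The transfer matrix `[1 + g̃ᵀÑ; L̃]` and its H∞ norm. -/
def perfWeight {n : ℕ} (g : Fin n → ℝ) (Θ : Response n 1 1) : ℝ :=
  hinfNorm (col2 (1 + (rmap (rowVec g) * Θ.N) 0 0) (Θ.L 0 0))

/-- The robust SLS objective `Q(g̃, Θ̃, α) = J(g̃, Θ̃) + εα‖R̃B₁ + ÑD₂₁‖`. -/
def Qval {n nw : ℕ} (g : Fin n → ℝ) (B₁ : Matrix (Fin n) (Fin nw) ℝ)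
    (D₂₁ : Matrix (Fin 1) (Fin nw) ℝ) (D₁₁ : Matrix (Fin 2) (Fin nw) ℝ)
    (ε : ℝ) (Θ : Response n 1 1) (α : ℝ) : ℝ :=
  cost g B₁ D₂₁ D₁₁ Θ + ε * α * hinfNorm (Θ.R * rmap B₁ + Θ.N * rmap D₂₁)

/-- Feasibility for the robust SLS problem for the estimate `g̃` with uncertainty
parameter `ε`: `α > 0`, `Θ̃` satisfies the SLS constraints for `(Z, e₁, g̃ᵀ)`, and
`εα‖Ñ‖ + ‖[1 + g̃ᵀÑ; L̃]‖ ≤ α`. -/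
def RobustFeasible {n : ℕ} (g : Fin n → ℝ) (ε : ℝ) (Θ : Response n 1 1) (α : ℝ) : Prop :=
  0 < α ∧ SLSConstraints (shiftMat n) (e1 n) (rowVec g) Θ ∧
  ε * α * hinfNorm Θ.N + perfWeight g Θ ≤ α

/-- `(Θ̃, α)` is a minimizer of the robust SLS problem for `g̃`. -/
def RobustOptimal {n nw : ℕ} (g : Fin n → ℝ) (B₁ : Matrix (Fin n) (Fin nw) ℝ)
    (D₂₁ : Matrix (Fin 1) (Fin nw) ℝ) (D₁₁ : Matrix (Fin 2) (Fin nw) ℝ)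
    (ε : ℝ) (Θ : Response n 1 1) (α : ℝ) : Prop :=
  RobustFeasible g ε Θ α ∧
  ∀ Θ' α', RobustFeasible g ε Θ' α' → Qval g B₁ D₂₁ D₁₁ ε Θ α ≤ Qval g B₁ D₂₁ D₁₁ ε Θ' α'

/-- `Θ₀` is a minimizer of `J(g, ·)` over responses satisfying the SLS constraints
for the plant `(Z, e₁, gᵀ)`. -/
def OptimalResponse {n nw : ℕ} (g : Fin n → ℝ) (B₁ : Matrix (Fin n) (Fin nw) ℝ)
    (D₂₁ : Matrix (Fin 1) (Fin nw) ℝ) (D₁₁ : Matrix (Fin 2) (Fin nw) ℝ)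
    (Θ : Response n 1 1) : Prop :=
  SLSConstraints (shiftMat n) (e1 n) (rowVec g) Θ ∧
  ∀ Θ', SLSConstraints (shiftMat n) (e1 n) (rowVec g) Θ' →
    cost g B₁ D₂₁ D₁₁ Θ ≤ cost g B₁ D₂₁ D₁₁ Θ'

/-- The FIR transfer function `G(z) = Σ_{t=1}^{r−1} g_t z^{−t}` for
`g = (g₁, …, g_{r−1})`. -/
def firTF {n : ℕ} (g : Fin n → ℝ) : TF :=
  ∑ t : Fin n, RatFunc.C (g t) * (RatFunc.X)⁻¹ ^ ((t : ℕ) + 1)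

/-- The FIR transfer function `G(z) = Σ_{k=0}^{T−1} g_k z^{−k}` for a full
impulse-response vector `g_{0:T−1}`. -/
def firTF0 {T : ℕ} (g : Fin T → ℝ) : TF :=
  ∑ k : Fin T, RatFunc.C (g k) * (RatFunc.X)⁻¹ ^ (k : ℕ)

/-! ### Coarse-grained identification -/

/-- Euclidean (ℓ2) norm of a finite real vector. -/
def euclNorm {r : ℕ} (x : Fin r → ℝ) : ℝ := Real.sqrt (∑ i, x i ^ 2)

/-- ℓp norm of a finite real vector, `p ∈ [1, ∞]`. -/
def lpNorm {T : ℕ} (p : ℝ≥0∞) (x : Fin T → ℝ) : ℝ :=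
  if p = ∞ then ⨆ i, |x i| else (∑ i, |x i| ^ p.toReal) ^ (1 / p.toReal)

/-- `r^{2/max(p,2)}` as a real number. -/
def rExp (p : ℝ≥0∞) (r : ℕ) : ℝ := (r : ℝ) ^ ((2 / max p 2).toReal)

/-- The T×T lower-triangular Toeplitz matrix whose first column is `u`. -/
def toep {T : ℕ} (u : Fin T → ℝ) : Matrix (Fin T) (Fin T) ℝ :=
  Matrix.of fun i j =>
    if (j : ℕ) ≤ (i : ℕ) then u ⟨(i : ℕ) - (j : ℕ), lt_of_le_of_lt (Nat.sub_le _ _) i.isLt⟩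
    else 0

/-- The stacked input matrix `Z_mat = [Toep(u₁); …; Toep(u_m)]`. -/
def Zmat {T mE : ℕ} (u : Fin mE → Fin T → ℝ) : Matrix (Fin mE × Fin T) (Fin T) ℝ :=
  Matrix.of fun pr j => toep (u pr.1) pr.2 j

/-- `Z_matᵀ Z_mat`. -/
def ZtZ {T mE : ℕ} (u : Fin mE → Fin T → ℝ) : Matrix (Fin T) (Fin T) ℝ :=
  (Zmat u)ᵀ * Zmat u

/-- The least-squares estimate `g̃_{0:T−1} = (Z_matᵀZ_mat)⁻¹Z_matᵀ(y₁; …; y_m)`. -/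
def lsEst {T mE : ℕ} (u : Fin mE → Fin T → ℝ) (y : Fin mE → Fin T → ℝ) : Fin T → ℝ :=
  ((ZtZ u)⁻¹ * (Zmat u)ᵀ).mulVec fun pr => y pr.1 pr.2

/-- Pad the FIR coefficients `g = (g₁, …, g_{r−1})` to the impulse response
`g_{0:T−1} = (0, g₁, …, g_{r−1}, 0, …, 0)`. -/
def pad {r T : ℕ} (_ : r ≤ T) (g : Fin (r - 1) → ℝ) : Fin T → ℝ := fun k =>
  if hk : 1 ≤ (k : ℕ) ∧ (k : ℕ) < r then g ⟨(k : ℕ) - 1, by omega⟩ else 0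

/-- The estimated FIR coefficients `g̃ = (g̃₁, …, g̃_{r−1})` from coarse-grained
identification with true coefficients `g` and additive noise on the outputs. -/
def coarseEst {r T mE : ℕ} (hrT : r ≤ T) (u : Fin mE → Fin T → ℝ)
    (g : Fin (r - 1) → ℝ) (noise : Fin mE → Fin T → ℝ) : Fin (r - 1) → ℝ :=
  fun i =>
    lsEst u (fun k => (toep (u k)).mulVec (pad hrT g) + noise k)
      ⟨(i : ℕ) + 1, by have := i.isLt; omega⟩

/-! ### Gaussian random vectors -/

/-- The standard Gaussian measure on `Fin r → ℝ` (i.i.d. `N(0,1)` coordinates). -/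
def stdGaussianPi (r : ℕ) : Measure (Fin r → ℝ) :=
  Measure.pi fun _ => gaussianReal 0 1

/-- `δ` is a centered Gaussian random vector with covariance `Cov`: its law is the
pushforward of the standard Gaussian under some `A` with `AAᵀ = Cov`. -/
def IsCenteredGaussianVec {Ω : Type} [MeasurableSpace Ω] (P : Measure Ω) {r : ℕ}
    (δ : Ω → Fin r → ℝ) (Cov : Matrix (Fin r) (Fin r) ℝ) : Prop :=
  ∃ A : Matrix (Fin r) (Fin r) ℝ, A * Aᵀ = Cov ∧
    Measure.map δ P = Measure.map (fun x => A.mulVec x) (stdGaussianPi r)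

/-- The law of i.i.d. `N(0, σ²)` noise across `mE` experiments of length `T`. -/
def iidGaussianLaw (mE T : ℕ) (σ2 : ℝ) : Measure (Fin mE → Fin T → ℝ) :=
  Measure.pi fun _ => Measure.pi fun _ => gaussianReal 0 σ2.toNNReal


/-- Scalar multiplication of a transfer matrix by a scalar transfer function. -/
def sMulTF {m n : ℕ} (c : TF) (M : TMat m n) : TMat m n := Matrix.of fun i j => c * M i j

/-- The perturbed response `Θ̂` with `R̂ = (I+Δ₁)⁻¹R̃`, `M̂ = M̃ − Δ₂(I+Δ₁)⁻¹R̃`,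
`N̂ = (I+Δ₁)⁻¹Ñ`, `L̂ = L̃ − Δ₂(I+Δ₁)⁻¹Ñ` (with the rational matrix inverse). -/
def deltaPerturb {n p q : ℕ} (Δ₁ : TMat n n) (Δ₂ : TMat p n) (Θ : Response n p q) :
    Response n p q where
  R := (1 + Δ₁)⁻¹ * Θ.R
  M := Θ.M - Δ₂ * ((1 + Δ₁)⁻¹ * Θ.R)
  N := (1 + Δ₁)⁻¹ * Θ.N
  L := Θ.L - Δ₂ * ((1 + Δ₁)⁻¹ * Θ.N)

/-- The Sherman–Morrison form of the perturbed response in the FIR SISO case: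
`[[R̂, N̂],[M̂, L̂]] = [[R̃, Ñ],[M̃, L̃]] + (1 − δᵀÑ)⁻¹·[Ñδᵀ; L̃δᵀ]·[R̃, Ñ]`. -/
def smPerturb {n : ℕ} (δ : Fin n → ℝ) (Θ : Response n 1 1) : Response n 1 1 where
  R := Θ.R + sMulTF (1 - (rmap (rowVec δ) * Θ.N) 0 0)⁻¹ (Θ.N * rmap (rowVec δ) * Θ.R)
  M := Θ.M + sMulTF (1 - (rmap (rowVec δ) * Θ.N) 0 0)⁻¹ (Θ.L * rmap (rowVec δ) * Θ.R)
  N := Θ.N + sMulTF (1 - (rmap (rowVec δ) * Θ.N) 0 0)⁻¹ (Θ.N * rmap (rowVec δ) * Θ.N)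
  L := Θ.L + sMulTF (1 - (rmap (rowVec δ) * Θ.N) 0 0)⁻¹ (Θ.L * rmap (rowVec δ) * Θ.N)

/-- The block-diagonal matrix with `m` copies of `Toep(g)` on the diagonal
(the action of `Toep(g)` on the stacked process noise of `m` experiments). -/
def bigToep {T mE : ℕ} (g : Fin T → ℝ) : Matrix (Fin mE × Fin T) (Fin mE × Fin T) ℝ :=
  Matrix.of fun pr qr => if pr.1 = qr.1 then toep g pr.2 qr.2 else 0

end SLS

open SLS

/-! ### Auxiliary scalar lemmas -/

namespace SLSAux

open SLS

lemma properTF_iff (f : TF) : ProperTF f ↔ f.intDegree ≤ 0 := by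
  rcases eq_or_ne f 0 with rfl | hf
  · simp [ProperTF, RatFunc.num_zero, RatFunc.denom_zero]
  · unfold ProperTF RatFunc.intDegree
    rw [Polynomial.degree_eq_natDegree (RatFunc.num_ne_zero hf),
      Polynomial.degree_eq_natDegree f.denom_ne_zero]
    constructor
    · intro h
      have : f.num.natDegree ≤ f.denom.natDegree := by exact_mod_cast h
      omega
    · intro h
      have : f.num.natDegree ≤ f.denom.natDegree := by omega
      exact_mod_cast this

lemma strictlyProperTF_iff (f : TF) : StrictlyProperTF f ↔ f = 0 ∨ f.intDegree < 0 := by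
  rcases eq_or_ne f 0 with rfl | hf
  · simp only [eq_self_iff_true, true_or, iff_true]
    unfold StrictlyProperTF
    rw [RatFunc.num_zero, RatFunc.denom_zero, Polynomial.degree_zero, Polynomial.degree_one]
    exact WithBot.bot_lt_coe 0
  · simp only [hf, false_or]
    unfold StrictlyProperTF RatFunc.intDegree
    rw [Polynomial.degree_eq_natDegree (RatFunc.num_ne_zero hf),
      Polynomial.degree_eq_natDegree f.denom_ne_zero]
    constructor
    · intro h
      have : f.num.natDegree < f.denom.natDegree := by exact_mod_cast h
      omega
    · intro h
      have : f.num.natDegree < f.denom.natDegree := by omega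
      exact_mod_cast this

lemma stableTF_algebraMap (pp : Polynomial ℝ) :
    StableTF (algebraMap (Polynomial ℝ) TF pp) := by
  intro z hz
  rw [RatFunc.denom_algebraMap] at hz
  simp at hz

lemma stableTF_zero : StableTF (0 : TF) := by
  simpa using stableTF_algebraMap 0

lemma stableTF_C (r : ℝ) : StableTF (RatFunc.C r) := by
  simpa [RatFunc.algebraMap_C] using stableTF_algebraMap (Polynomial.C r)

lemma stable_mul {f g : TF} (hf : StableTF f) (hg : StableTF g) : StableTF (f * g) := by
  intro z hz
  obtain ⟨c, hc⟩ := RatFunc.denom_mul_dvd f g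
  have h0 : ((f.denom * g.denom).map (algebraMap ℝ ℂ)).eval z = 0 := by
    rw [hc, Polynomial.map_mul, Polynomial.eval_mul, hz, zero_mul]
  rw [Polynomial.map_mul, Polynomial.eval_mul, mul_eq_zero] at h0
  rcases h0 with h | h
  · exact hf z h
  · exact hg z h

lemma stable_add {f g : TF} (hf : StableTF f) (hg : StableTF g) : StableTF (f + g) := by
  intro z hz
  obtain ⟨c, hc⟩ := RatFunc.denom_add_dvd f g
  have h0 : ((f.denom * g.denom).map (algebraMap ℝ ℂ)).eval z = 0 := by
    rw [hc, Polynomial.map_mul, Polynomial.eval_mul, hz, zero_mul]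
  rw [Polynomial.map_mul, Polynomial.eval_mul, mul_eq_zero] at h0
  rcases h0 with h | h
  · exact hf z h
  · exact hg z h

lemma stable_neg {f : TF} (hf : StableTF f) : StableTF (-f) := by
  have : -f = RatFunc.C (-1 : ℝ) * f := by
    rw [map_neg, map_one, neg_one_mul]
  rw [this]
  exact stable_mul (stableTF_C (-1)) hf

lemma stable_sub {f g : TF} (hf : StableTF f) (hg : StableTF g) : StableTF (f - g) := by
  rw [sub_eq_add_neg]; exact stable_add hf (stable_neg hg)

lemma properTF_zero : ProperTF (0 : TF) := by rw [properTF_iff]; simp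

lemma strictlyProperTF_zero : StrictlyProperTF (0 : TF) := by
  rw [strictlyProperTF_iff]; left; rfl

lemma proper_mul {f g : TF} (hf : ProperTF f) (hg : ProperTF g) : ProperTF (f * g) := by
  rcases eq_or_ne f 0 with rfl | hf0
  · simpa using properTF_zero
  rcases eq_or_ne g 0 with rfl | hg0
  · simpa using properTF_zero
  rw [properTF_iff] at hf hg ⊢
  rw [RatFunc.intDegree_mul hf0 hg0]
  omega

lemma sp_mul_proper {f g : TF} (hf : StrictlyProperTF f) (hg : ProperTF g) :
    StrictlyProperTF (f * g) := by
  rcases eq_or_ne f 0 with rfl | hf0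
  · simpa using strictlyProperTF_zero
  rcases eq_or_ne g 0 with rfl | hg0
  · simpa using strictlyProperTF_zero
  rw [strictlyProperTF_iff] at hf ⊢
  rw [properTF_iff] at hg
  rcases hf with h | h
  · exact absurd h hf0
  right
  rw [RatFunc.intDegree_mul hf0 hg0]
  omega

lemma proper_mul_sp {f g : TF} (hf : ProperTF f) (hg : StrictlyProperTF g) :
    StrictlyProperTF (f * g) := by
  rw [mul_comm]; exact sp_mul_proper hg hf

lemma sp_mul_deg_one {f g : TF} (hf : StrictlyProperTF f) (hg : g.intDegree ≤ 1) :
    ProperTF (f * g) := by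
  rcases eq_or_ne f 0 with rfl | hf0
  · simpa using properTF_zero
  rcases eq_or_ne g 0 with rfl | hg0
  · simpa using properTF_zero
  rw [strictlyProperTF_iff] at hf
  rcases hf with h | h
  · exact absurd h hf0
  rw [properTF_iff, RatFunc.intDegree_mul hf0 hg0]
  omega

lemma proper_add {f g : TF} (hf : ProperTF f) (hg : ProperTF g) : ProperTF (f + g) := by
  rcases eq_or_ne (f + g) 0 with hfg | hfg
  · rw [hfg]; exact properTF_zero
  rcases eq_or_ne g 0 with rfl | hg0
  · simpa using hf
  rw [properTF_iff] at hf hg ⊢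
  calc (f + g).intDegree ≤ max f.intDegree g.intDegree := RatFunc.intDegree_add_le hg0 hfg
    _ ≤ 0 := by omega

lemma sp_add {f g : TF} (hf : StrictlyProperTF f) (hg : StrictlyProperTF g) :
    StrictlyProperTF (f + g) := by
  rcases eq_or_ne (f + g) 0 with hfg | hfg
  · rw [hfg]; exact strictlyProperTF_zero
  rcases eq_or_ne g 0 with rfl | hg0
  · simpa using hf
  rcases eq_or_ne f 0 with rfl | hf0
  · simpa using hg
  rw [strictlyProperTF_iff] at hf hg ⊢
  rcases hf with h | h; · exact absurd h hf0
  rcases hg with h' | h'; · exact absurd h' hg0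
  right
  calc (f + g).intDegree ≤ max f.intDegree g.intDegree := RatFunc.intDegree_add_le hg0 hfg
    _ < 0 := by omega

lemma sp_neg {f : TF} (hf : StrictlyProperTF f) : StrictlyProperTF (-f) := by
  rw [strictlyProperTF_iff] at hf ⊢
  rcases hf with h | h
  · left; rw [h, neg_zero]
  · right; rwa [RatFunc.intDegree_neg]

lemma proper_neg {f : TF} (hf : ProperTF f) : ProperTF (-f) := by
  rw [properTF_iff] at hf ⊢
  rwa [RatFunc.intDegree_neg]

lemma sp_sub {f g : TF} (hf : StrictlyProperTF f) (hg : StrictlyProperTF g) :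
    StrictlyProperTF (f - g) := by
  rw [sub_eq_add_neg]; exact sp_add hf (sp_neg hg)

lemma proper_sub {f g : TF} (hf : ProperTF f) (hg : ProperTF g) : ProperTF (f - g) := by
  rw [sub_eq_add_neg]; exact proper_add hf (proper_neg hg)

/-- Strictly proper and stable scalar transfer functions. -/
def SPTF (f : TF) : Prop := StrictlyProperTF f ∧ StableTF f

lemma memRHinfTF_zero : MemRHinfTF (0 : TF) := ⟨properTF_zero, stableTF_zero⟩

lemma sptf_zero : SPTF (0 : TF) := ⟨strictlyProperTF_zero, stableTF_zero⟩

lemma mem_mul {f g : TF} (hf : MemRHinfTF f) (hg : MemRHinfTF g) :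
    MemRHinfTF (f * g) := ⟨proper_mul hf.1 hg.1, stable_mul hf.2 hg.2⟩

lemma mem_add {f g : TF} (hf : MemRHinfTF f) (hg : MemRHinfTF g) :
    MemRHinfTF (f + g) := ⟨proper_add hf.1 hg.1, stable_add hf.2 hg.2⟩

lemma mem_sub {f g : TF} (hf : MemRHinfTF f) (hg : MemRHinfTF g) :
    MemRHinfTF (f - g) := ⟨proper_sub hf.1 hg.1, stable_sub hf.2 hg.2⟩

lemma sptf_add {f g : TF} (hf : SPTF f) (hg : SPTF g) : SPTF (f + g) :=
  ⟨sp_add hf.1 hg.1, stable_add hf.2 hg.2⟩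

lemma sptf_sub {f g : TF} (hf : SPTF f) (hg : SPTF g) : SPTF (f - g) :=
  ⟨sp_sub hf.1 hg.1, stable_sub hf.2 hg.2⟩

lemma sptf_mul_mem {f g : TF} (hf : SPTF f) (hg : MemRHinfTF g) : SPTF (f * g) :=
  ⟨sp_mul_proper hf.1 hg.1, stable_mul hf.2 hg.2⟩

lemma mem_mul_sp {f g : TF} (hf : MemRHinfTF f) (hg : SPTF g) : SPTF (f * g) :=
  ⟨proper_mul_sp hf.1 hg.1, stable_mul hf.2 hg.2⟩

lemma sptf_toMem {f : TF} (hf : SPTF f) : MemRHinfTF f :=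
  ⟨le_of_lt hf.1, hf.2⟩

lemma memRHinfTF_sum {ι : Type*} (s : Finset ι) (f : ι → TF)
    (h : ∀ i ∈ s, MemRHinfTF (f i)) : MemRHinfTF (∑ i ∈ s, f i) :=
  Finset.sum_induction f MemRHinfTF (fun _ _ ha hb => mem_add ha hb) memRHinfTF_zero h

lemma sptf_sum {ι : Type*} (s : Finset ι) (f : ι → TF)
    (h : ∀ i ∈ s, SPTF (f i)) : SPTF (∑ i ∈ s, f i) :=
  Finset.sum_induction f SPTF (fun _ _ ha hb => sptf_add ha hb) sptf_zero h

/-! ### Matrix-level lemmas -/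

/-- Entrywise strictly proper and stable transfer matrix. -/
def SPS {a b : ℕ} (M : TMat a b) : Prop := ∀ i j, SPTF (M i j)

lemma sps_strictlyProper {a b : ℕ} {M : TMat a b} (h : SPS M) : StrictlyProper M :=
  fun i j => (h i j).1

lemma sps_memRHinf {a b : ℕ} {M : TMat a b} (h : SPS M) : MemRHinf M :=
  fun i j => sptf_toMem (h i j)

lemma sps_of {a b : ℕ} {M : TMat a b} (h1 : StrictlyProper M) (h2 : MemRHinf M) : SPS M :=
  fun i j => ⟨h1 i j, (h2 i j).2⟩

lemma rh_mul {a b c : ℕ} {M : TMat a b} {N : TMat b c}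
    (hM : MemRHinf M) (hN : MemRHinf N) : MemRHinf (M * N) := by
  intro i j
  rw [Matrix.mul_apply]
  exact memRHinfTF_sum _ _ fun k _ => mem_mul (hM i k) (hN k j)

lemma sps_mul_mem {a b c : ℕ} {M : TMat a b} {N : TMat b c}
    (hM : SPS M) (hN : MemRHinf N) : SPS (M * N) := by
  intro i j
  rw [Matrix.mul_apply]
  exact sptf_sum _ _ fun k _ => sptf_mul_mem (hM i k) (hN k j)

lemma rh_mul_sps {a b c : ℕ} {M : TMat a b} {N : TMat b c}
    (hM : MemRHinf M) (hN : SPS N) : SPS (M * N) := by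
  intro i j
  rw [Matrix.mul_apply]
  exact sptf_sum _ _ fun k _ => mem_mul_sp (hM i k) (hN k j)

lemma sps_sub {a b : ℕ} {M N : TMat a b} (hM : SPS M) (hN : SPS N) : SPS (M - N) := by
  intro i j
  rw [Matrix.sub_apply]
  exact sptf_sub (hM i j) (hN i j)

lemma rh_sub {a b : ℕ} {M N : TMat a b} (hM : MemRHinf M) (hN : MemRHinf N) :
    MemRHinf (M - N) := by
  intro i j
  rw [Matrix.sub_apply]
  exact mem_sub (hM i j) (hN i j)

lemma memRHinf_rmap {a b : ℕ} (M : Matrix (Fin a) (Fin b) ℝ) : MemRHinf (rmap M) := by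
  intro i j
  show MemRHinfTF (RatFunc.C (M i j))
  constructor
  · rw [properTF_iff, RatFunc.intDegree_C]
  · exact stableTF_C _

lemma zIA_apply {m : ℕ} (A : Matrix (Fin m) (Fin m) ℝ) (i j : Fin m) :
    zIA A i j = algebraMap (Polynomial ℝ) TF
      ((if i = j then Polynomial.X else 0) - Polynomial.C (A i j)) := by
  rw [map_sub]
  simp only [zIA, rmap, Matrix.sub_apply, Matrix.diagonal_apply, Matrix.map_apply,
    RatFunc.algebraMap_C]
  split <;> simp [RatFunc.algebraMap_X]

lemma zIA_deg {m : ℕ} (A : Matrix (Fin m) (Fin m) ℝ) (i j : Fin m) :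
    (zIA A i j).intDegree ≤ 1 ∧ StableTF (zIA A i j) := by
  rw [zIA_apply]
  constructor
  · rw [RatFunc.intDegree_polynomial]
    have h1 : ((if i = j then Polynomial.X else 0) - Polynomial.C (A i j)).natDegree ≤ 1 := by
      refine le_trans (Polynomial.natDegree_sub_le _ _) ?_
      simp only [Polynomial.natDegree_C, max_le_iff]
      constructor
      · split <;> simp [Polynomial.natDegree_X]
      · omega
    exact_mod_cast h1
  · exact stableTF_algebraMap _

/-- Product of a strictly-proper-stable matrix with a `zIA`-type matrix is in RH∞. -/
lemma sps_mul_zIA {a b : ℕ} {M : TMat a b} (hM : SPS M) (A : Matrix (Fin b) (Fin b) ℝ) :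
    MemRHinf (M * zIA A) := by
  intro i j
  rw [Matrix.mul_apply]
  refine memRHinfTF_sum _ _ fun k _ => ?_
  obtain ⟨hd, hs⟩ := zIA_deg A k j
  exact ⟨sp_mul_deg_one (hM i k).1 hd, stable_mul (hM i k).2 hs⟩

end SLSAux

/-- if `Θ̃` satisfies the robust SLS constraints for `(A, B₂, C₂)` with
perturbations `(Δ₁, Δ₂)` and `(I + Δ₁)⁻¹` exists and lies in RH∞, then the perturbed
response `Θ̂` satisfies the SLS constraints for `(A, B₂, C₂)`. -/
theorem statement_3 {n p q : ℕ} (A : Matrix (Fin n) (Fin n) ℝ)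
    (B₂ : Matrix (Fin n) (Fin p) ℝ) (C₂ : Matrix (Fin q) (Fin n) ℝ)
    (Δ₁ : TMat n n) (Δ₂ : TMat p n) (Θ : Response n p q)
    (hrob : RobustSLSConstraints A B₂ C₂ Δ₁ Δ₂ Θ)
    (hinv : IsUnit (1 + Δ₁).det)
    (hstab : MemRHinf (1 + Δ₁)⁻¹) :
    SLSConstraints A B₂ C₂ (deltaPerturb Δ₁ Δ₂ Θ) := by
  open SLSAux in
  obtain ⟨h1, h2, h3, h4, hstabΘ⟩ := hrob
  obtain ⟨spR, spM, spN, rhR, rhM, rhN, rhL⟩ := hstabΘ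
  set E : TMat n n := 1 + Δ₁ with hEdef
  have hE1 : E * E⁻¹ = 1 := Matrix.mul_nonsing_inv _ hinv
  have hE2 : E⁻¹ * E = 1 := Matrix.nonsing_inv_mul _ hinv
  have hBM : rmap B₂ * Θ.M = zIA A * Θ.R - 1 := by rw [← h1]; abel
  have hBL : rmap B₂ * Θ.L = zIA A * Θ.N := (sub_eq_zero.mp h2).symm
  -- the key identity `B₂ Δ₂ = (zI - A) Δ₁`
  have hkey : rmap B₂ * Δ₂ = zIA A * Δ₁ := by
    rw [← h4, Matrix.mul_sub, ← Matrix.mul_assoc, ← Matrix.mul_assoc, hBM, hBL,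
      Matrix.sub_mul, Matrix.one_mul, Matrix.mul_assoc, Matrix.mul_assoc]
    have : zIA A * (Θ.R * zIA A) - zIA A * (Θ.N * rmap C₂) =
        zIA A * (Θ.R * zIA A - Θ.N * rmap C₂) := by rw [Matrix.mul_sub]
    rw [sub_sub, add_comm, ← sub_sub, this, h3, hEdef, Matrix.mul_add,
      Matrix.mul_one]
    abel
  -- main cancellation: `(zI - A) E⁻¹ W + B₂ Δ₂ E⁻¹ W = (zI - A) W`
  have hmain : ∀ {k : ℕ} (W : TMat n k),
      zIA A * (E⁻¹ * W) + rmap B₂ * (Δ₂ * (E⁻¹ * W)) = zIA A * W := by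
    intro k W
    rw [← Matrix.mul_assoc (rmap B₂) Δ₂, hkey, ← Matrix.mul_assoc (zIA A) E⁻¹ W,
      Matrix.mul_assoc (zIA A) Δ₁, ← Matrix.mul_assoc Δ₁ E⁻¹ W,
      ← Matrix.mul_assoc (zIA A) (Δ₁ * E⁻¹) W, ← Matrix.add_mul]
    have hsum : E⁻¹ + Δ₁ * E⁻¹ = E * E⁻¹ := by
      rw [hEdef, Matrix.add_mul, Matrix.one_mul]
    rw [show zIA A * E⁻¹ + zIA A * (Δ₁ * E⁻¹) = zIA A * (E⁻¹ + Δ₁ * E⁻¹) from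
      (Matrix.mul_add _ _ _).symm, hsum, hE1, Matrix.mul_one]
  refine ⟨?_, ?_, ?_, ?_, ?_⟩
  · -- zIA A * R̂ - B₂ * M̂ = 1
    show zIA A * (E⁻¹ * Θ.R) - rmap B₂ * (Θ.M - Δ₂ * (E⁻¹ * Θ.R)) = 1
    rw [Matrix.mul_sub, ← h1, ← hmain Θ.R]
    abel
  · -- zIA A * N̂ - B₂ * L̂ = 0
    show zIA A * (E⁻¹ * Θ.N) - rmap B₂ * (Θ.L - Δ₂ * (E⁻¹ * Θ.N)) = 0
    rw [Matrix.mul_sub, ← h2, ← hmain Θ.N]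
    abel
  · -- R̂ zIA A - N̂ C₂ = 1
    show E⁻¹ * Θ.R * zIA A - E⁻¹ * Θ.N * rmap C₂ = 1
    rw [Matrix.mul_assoc, Matrix.mul_assoc, ← Matrix.mul_sub, h3, hE2]
  · -- M̂ zIA A - L̂ C₂ = 0
    show (Θ.M - Δ₂ * (E⁻¹ * Θ.R)) * zIA A - (Θ.L - Δ₂ * (E⁻¹ * Θ.N)) * rmap C₂ = 0
    rw [Matrix.sub_mul, Matrix.sub_mul]
    have hx : Δ₂ * (E⁻¹ * Θ.R) * zIA A - Δ₂ * (E⁻¹ * Θ.N) * rmap C₂ = Δ₂ := by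
      rw [Matrix.mul_assoc Δ₂ _ (zIA A), Matrix.mul_assoc Δ₂ _ (rmap C₂),
        Matrix.mul_assoc E⁻¹ Θ.R (zIA A), Matrix.mul_assoc E⁻¹ Θ.N (rmap C₂),
        ← Matrix.mul_sub, ← Matrix.mul_sub, h3, hE2, Matrix.mul_one]
    calc Θ.M * zIA A - Δ₂ * (E⁻¹ * Θ.R) * zIA A -
          (Θ.L * rmap C₂ - Δ₂ * (E⁻¹ * Θ.N) * rmap C₂)
        = (Θ.M * zIA A - Θ.L * rmap C₂) -
          (Δ₂ * (E⁻¹ * Θ.R) * zIA A - Δ₂ * (E⁻¹ * Θ.N) * rmap C₂) := by abel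
      _ = 0 := by rw [h4, hx, sub_self]
  · -- stability
    have hRs : SLSAux.SPS Θ.R := SLSAux.sps_of spR rhR
    have hMs : SLSAux.SPS Θ.M := SLSAux.sps_of spM rhM
    have hNs : SLSAux.SPS Θ.N := SLSAux.sps_of spN rhN
    have hEinv : MemRHinf E⁻¹ := hstab
    have hΔ₂ : MemRHinf Δ₂ := by
      rw [← h4]
      exact SLSAux.rh_sub (SLSAux.sps_mul_zIA hMs A) (SLSAux.rh_mul rhL (SLSAux.memRHinf_rmap C₂))
    have hRhat : SLSAux.SPS (E⁻¹ * Θ.R) := SLSAux.rh_mul_sps hEinv hRs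
    have hNhat : SLSAux.SPS (E⁻¹ * Θ.N) := SLSAux.rh_mul_sps hEinv hNs
    have hMhat : SLSAux.SPS (Θ.M - Δ₂ * (E⁻¹ * Θ.R)) :=
      SLSAux.sps_sub hMs (SLSAux.rh_mul_sps hΔ₂ hRhat)
    have hLhat : MemRHinf (Θ.L - Δ₂ * (E⁻¹ * Θ.N)) :=
      SLSAux.rh_sub rhL (SLSAux.sps_memRHinf (SLSAux.rh_mul_sps hΔ₂ hNhat))
    exact ⟨SLSAux.sps_strictlyProper hRhat, SLSAux.sps_strictlyProper hMhat,
      SLSAux.sps_strictlyProper hNhat, SLSAux.sps_memRHinf hRhat,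
      SLSAux.sps_memRHinf hMhat, SLSAux.sps_memRHinf hNhat, hLhat⟩
end
end

section
/- Suppose the system response Θ̃ = {R̃, M̃, Ñ, L̃} satisfies the robust SLS constraints for the plant (A, B₂, C₂) with perturbations (Δ₁, Δ₂), where Δ₁ ∈ RH∞, and that R̃ is invertible as a rational matrix. If ‖Δ₁‖ < 1 in H∞ norm, then the controller K̃ = L̃ − M̃R̃⁻¹Ñ internally stabilizes the plant (A, B₂, C₂) and achieves the closed-loop response Θ̂ given by R̂ = (I + Δ₁)⁻¹R̃, M̂ = M̃ − Δ₂(I + Δ₁)⁻¹R̃, N̂ = (I + Δ₁)⁻¹Ñ, L̂ = L̃ − Δ₂(I + Δ₁)⁻¹Ñ. -/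
/- Preliminaries: transfer functions as real rational functions, RH∞, H∞ norms,
   System-Level Synthesis (SLS) constraints, controllers, closed-loop responses,
   coarse-grained identification, Gaussian vectors. -/

noncomputable section
open scoped Matrix BigOperators ENNReal
open MeasureTheory ProbabilityTheory Polynomial

open SLS

namespace SLSProof
open SLS

abbrev φc : ℝ →+* ℂ := algebraMap ℝ ℂ
abbrev ζ : ℝ[X] →+* TF := (algebraMap ℝ[X] TF : ℝ[X] →+* TF)

lemma rep_self (f : TF) : f * ζ f.denom = ζ f.num := by
  calc f * ζ f.denom = (ζ f.num / ζ f.denom) * ζ f.denom := by rw [RatFunc.num_div_denom]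
    _ = ζ f.num := div_mul_cancel₀ _ (RatFunc.algebraMap_ne_zero (RatFunc.denom_ne_zero f))

lemma key_poly {f : TF} {p q : ℝ[X]} (h : f * ζ q = ζ p) :
    f.num * q = p * f.denom := by
  apply RatFunc.algebraMap_injective (K := ℝ)
  rw [map_mul, map_mul]
  calc (ζ f.num) * ζ q = (f * ζ f.denom) * ζ q := by rw [rep_self]
    _ = (f * ζ q) * ζ f.denom := by ring
    _ = ζ p * ζ f.denom := by rw [h]

lemma denom_dvd_of_rep {f : TF} {p q : ℝ[X]} (hq : q ≠ 0) (h : f * ζ q = ζ p) :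
    f.denom ∣ q := by
  refine (RatFunc.denom_dvd hq).mpr ⟨p, ?_⟩
  rw [eq_div_iff (RatFunc.algebraMap_ne_zero hq)]
  exact h

lemma proper_of_rep {f : TF} {p q : ℝ[X]} (hq : q ≠ 0) (h : f * ζ q = ζ p)
    (hd : p.degree ≤ q.degree) : ProperTF f := by
  have key := key_poly h
  by_cases h0 : f.num = 0
  · simp [ProperTF, h0]
  · have hp : p ≠ 0 := by
      intro hp0
      apply mul_ne_zero h0 hq
      rw [key, hp0, zero_mul]
    have hdenom := RatFunc.denom_ne_zero f
    have hdeg := congrArg Polynomial.degree key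
    rw [degree_mul, degree_mul, degree_eq_natDegree h0, degree_eq_natDegree hq,
      degree_eq_natDegree hp, degree_eq_natDegree hdenom] at hdeg
    have hnat : f.num.natDegree + q.natDegree = p.natDegree + f.denom.natDegree := by
      exact_mod_cast hdeg
    have hpq : p.natDegree ≤ q.natDegree := natDegree_le_natDegree hd
    rw [ProperTF, degree_eq_natDegree h0, degree_eq_natDegree hdenom]
    exact_mod_cast (by omega : f.num.natDegree ≤ f.denom.natDegree)

lemma strictlyProper_of_rep {f : TF} {p q : ℝ[X]} (hq : q ≠ 0) (h : f * ζ q = ζ p)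
    (hd : p.degree < q.degree) : StrictlyProperTF f := by
  have key := key_poly h
  have hdenom := RatFunc.denom_ne_zero f
  by_cases h0 : f.num = 0
  · rw [StrictlyProperTF, h0, degree_zero, degree_eq_natDegree hdenom]
    exact WithBot.bot_lt_coe _
  · have hp : p ≠ 0 := by
      intro hp0
      apply mul_ne_zero h0 hq
      rw [key, hp0, zero_mul]
    have hdeg := congrArg Polynomial.degree key
    rw [degree_mul, degree_mul, degree_eq_natDegree h0, degree_eq_natDegree hq,
      degree_eq_natDegree hp, degree_eq_natDegree hdenom] at hdeg
    have hnat : f.num.natDegree + q.natDegree = p.natDegree + f.denom.natDegree := by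
      exact_mod_cast hdeg
    have hpq : p.natDegree < q.natDegree := natDegree_lt_natDegree hp hd
    rw [StrictlyProperTF, degree_eq_natDegree h0, degree_eq_natDegree hdenom]
    exact_mod_cast (by omega : f.num.natDegree < f.denom.natDegree)

lemma stable_of_rep {f : TF} {p q : ℝ[X]} (hq : q ≠ 0) (h : f * ζ q = ζ p)
    (hroots : ∀ z : ℂ, (q.map φc).eval z = 0 → ‖z‖ < 1) : StableTF f := by
  intro z hz
  apply hroots z
  obtain ⟨c, hc⟩ := denom_dvd_of_rep hq h
  rw [hc, Polynomial.map_mul, Polynomial.eval_mul, hz, zero_mul]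


/-- strictly proper and stable -/
def SPS (f : TF) : Prop := StrictlyProperTF f ∧ StableTF f

lemma sps_memRH {f : TF} (h : SPS f) : MemRHinfTF f := ⟨le_of_lt h.1, h.2⟩

lemma rep_add (f g : TF) :
    (f + g) * ζ (f.denom * g.denom) = ζ (f.num * g.denom + f.denom * g.num) := by
  rw [map_mul, map_add, map_mul, map_mul]
  linear_combination (ζ g.denom) * rep_self f + (ζ f.denom) * rep_self g

lemma rep_mul (f g : TF) :
    (f * g) * ζ (f.denom * g.denom) = ζ (f.num * g.num) := by
  rw [map_mul, map_mul]
  linear_combination (g * ζ g.denom) * rep_self f + (ζ f.num) * rep_self g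

lemma rep_neg (f : TF) : (-f) * ζ f.denom = ζ (-f.num) := by
  rw [map_neg]; linear_combination -(rep_self f)

lemma roots_mul {q1 q2 : ℝ[X]} (h1 : ∀ z : ℂ, ((q1).map φc).eval z = 0 → ‖z‖ < 1)
    (h2 : ∀ z : ℂ, ((q2).map φc).eval z = 0 → ‖z‖ < 1) :
    ∀ z : ℂ, ((q1 * q2).map φc).eval z = 0 → ‖z‖ < 1 := by
  intro z hz
  rw [Polynomial.map_mul, Polynomial.eval_mul, mul_eq_zero] at hz
  rcases hz with h | h
  exacts [h1 z h, h2 z h]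

lemma denom_roots {f : TF} (hf : StableTF f) :
    ∀ z : ℂ, ((f.denom).map φc).eval z = 0 → ‖z‖ < 1 := hf

lemma memRH_add {f g : TF} (hf : MemRHinfTF f) (hg : MemRHinfTF g) :
    MemRHinfTF (f + g) := by
  have hq := mul_ne_zero (RatFunc.denom_ne_zero f) (RatFunc.denom_ne_zero g)
  refine ⟨proper_of_rep hq (rep_add f g) ?_, stable_of_rep hq (rep_add f g)
    (roots_mul hf.2 hg.2)⟩
  refine le_trans (degree_add_le _ _) (max_le ?_ ?_) <;> rw [degree_mul, degree_mul]
  · exact add_le_add_left hf.1 _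
  · exact add_le_add_right hg.1 _

lemma memRH_mul {f g : TF} (hf : MemRHinfTF f) (hg : MemRHinfTF g) :
    MemRHinfTF (f * g) := by
  have hq := mul_ne_zero (RatFunc.denom_ne_zero f) (RatFunc.denom_ne_zero g)
  refine ⟨proper_of_rep hq (rep_mul f g) ?_, stable_of_rep hq (rep_mul f g)
    (roots_mul hf.2 hg.2)⟩
  rw [degree_mul, degree_mul]
  exact add_le_add hf.1 hg.1

lemma memRH_neg {f : TF} (hf : MemRHinfTF f) : MemRHinfTF (-f) := by
  refine ⟨proper_of_rep (RatFunc.denom_ne_zero f) (rep_neg f) ?_,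
    stable_of_rep (RatFunc.denom_ne_zero f) (rep_neg f) hf.2⟩
  rw [degree_neg]; exact hf.1

lemma memRH_zero : MemRHinfTF 0 := by
  have h : (0 : TF) * ζ 1 = ζ 0 := by simp
  exact ⟨proper_of_rep one_ne_zero h (by simp), stable_of_rep one_ne_zero h
    (by intro z hz; simp at hz)⟩

lemma memRH_one : MemRHinfTF 1 := by
  have h : (1 : TF) * ζ 1 = ζ 1 := by simp
  exact ⟨proper_of_rep one_ne_zero h le_rfl, stable_of_rep one_ne_zero h
    (by intro z hz; simp at hz)⟩

lemma memRH_C (r : ℝ) : MemRHinfTF (RatFunc.C r) := by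
  have h : (RatFunc.C r) * ζ 1 = ζ (Polynomial.C r) := by
    rw [map_one, mul_one, RatFunc.algebraMap_C]
  exact ⟨proper_of_rep one_ne_zero h (by simpa [degree_one] using degree_C_le),
    stable_of_rep one_ne_zero h (by intro z hz; simp at hz)⟩

lemma memRH_sub {f g : TF} (hf : MemRHinfTF f) (hg : MemRHinfTF g) :
    MemRHinfTF (f - g) := by
  rw [sub_eq_add_neg]; exact memRH_add hf (memRH_neg hg)

lemma memRH_sum {ι : Type*} (s : Finset ι) (f : ι → TF)
    (h : ∀ i ∈ s, MemRHinfTF (f i)) : MemRHinfTF (∑ i ∈ s, f i) :=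
  Finset.sum_induction f MemRHinfTF (fun _ _ ha hb => memRH_add ha hb) memRH_zero h

lemma degree_mul_lt {p1 q1 p2 q2 : ℝ[X]} (hq1 : q1 ≠ 0) (hq2 : q2 ≠ 0)
    (h1 : p1.degree < q1.degree) (h2 : p2.degree ≤ q2.degree) :
    (p1 * p2).degree < (q1 * q2).degree := by
  by_cases h0 : p1 * p2 = 0
  · rw [h0, degree_zero, degree_mul, degree_eq_natDegree hq1, degree_eq_natDegree hq2]
    exact_mod_cast WithBot.bot_lt_coe (q1.natDegree + q2.natDegree)
  · have hp1 : p1 ≠ 0 := (mul_ne_zero_iff.mp h0).1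
    have hp2 : p2 ≠ 0 := (mul_ne_zero_iff.mp h0).2
    have l1 : p1.natDegree < q1.natDegree := natDegree_lt_natDegree hp1 h1
    have l2 : p2.natDegree ≤ q2.natDegree := natDegree_le_natDegree h2
    rw [degree_mul, degree_mul, degree_eq_natDegree hp1, degree_eq_natDegree hp2,
      degree_eq_natDegree hq1, degree_eq_natDegree hq2]
    exact_mod_cast (by omega : p1.natDegree + p2.natDegree < q1.natDegree + q2.natDegree)

lemma sps_zero : SPS 0 := by
  have h : (0 : TF) * ζ Polynomial.X = ζ 0 := by simp
  refine ⟨strictlyProper_of_rep X_ne_zero h ?_, stable_of_rep X_ne_zero h ?_⟩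
  · rw [degree_zero, degree_X]
    exact_mod_cast WithBot.bot_lt_coe 1
  intro z hz
  simp only [Polynomial.map_X, Polynomial.eval_X] at hz
  simp [hz]

lemma sps_add {f g : TF} (hf : SPS f) (hg : SPS g) : SPS (f + g) := by
  have hqf := RatFunc.denom_ne_zero f
  have hqg := RatFunc.denom_ne_zero g
  have hq := mul_ne_zero hqf hqg
  refine ⟨strictlyProper_of_rep hq (rep_add f g) ?_, stable_of_rep hq (rep_add f g)
    (roots_mul hf.2 hg.2)⟩
  refine lt_of_le_of_lt (degree_add_le _ _) (max_lt ?_ ?_)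
  · exact degree_mul_lt hqf hqg hf.1 le_rfl
  · calc (f.denom * g.num).degree = (g.num * f.denom).degree := by rw [mul_comm]
      _ < (g.denom * f.denom).degree := degree_mul_lt hqg hqf hg.1 le_rfl
      _ = (f.denom * g.denom).degree := by rw [mul_comm]

lemma sps_neg {f : TF} (hf : SPS f) : SPS (-f) := by
  refine ⟨strictlyProper_of_rep (RatFunc.denom_ne_zero f) (rep_neg f) ?_,
    stable_of_rep (RatFunc.denom_ne_zero f) (rep_neg f) hf.2⟩
  rw [degree_neg]; exact hf.1

lemma sps_sub {f g : TF} (hf : SPS f) (hg : SPS g) : SPS (f - g) := by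
  rw [sub_eq_add_neg]; exact sps_add hf (sps_neg hg)

lemma sps_sum {ι : Type*} (s : Finset ι) (f : ι → TF)
    (h : ∀ i ∈ s, SPS (f i)) : SPS (∑ i ∈ s, f i) :=
  Finset.sum_induction f SPS (fun _ _ ha hb => sps_add ha hb) sps_zero h

lemma sps_mul {f g : TF} (hf : MemRHinfTF f) (hg : SPS g) : SPS (f * g) := by
  have hqf := RatFunc.denom_ne_zero f
  have hqg := RatFunc.denom_ne_zero g
  have hq := mul_ne_zero hqf hqg
  refine ⟨strictlyProper_of_rep hq (rep_mul f g) ?_, stable_of_rep hq (rep_mul f g)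
    (roots_mul hf.2 hg.2)⟩
  calc (f.num * g.num).degree = (g.num * f.num).degree := by rw [mul_comm]
    _ < (g.denom * f.denom).degree := degree_mul_lt hqg hqf hg.1 hf.1
    _ = (f.denom * g.denom).degree := by rw [mul_comm]

lemma sps_mul' {f g : TF} (hf : SPS f) (hg : MemRHinfTF g) : SPS (f * g) := by
  rw [mul_comm]; exact sps_mul hg hf

lemma sps_mul_X {f : TF} (hf : SPS f) : MemRHinfTF (f * RatFunc.X) := by
  have hq := RatFunc.denom_ne_zero f
  have hrep : (f * RatFunc.X) * ζ f.denom = ζ (f.num * Polynomial.X) := by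
    rw [map_mul, RatFunc.algebraMap_X]
    linear_combination RatFunc.X * rep_self f
  refine ⟨proper_of_rep hq hrep ?_, stable_of_rep hq hrep hf.2⟩
  by_cases h0 : f.num = 0
  · simp [h0]
  · have := natDegree_lt_natDegree h0 hf.1
    rw [degree_mul, degree_X, degree_eq_natDegree h0, degree_eq_natDegree hq]
    exact_mod_cast (by omega : f.num.natDegree + 1 ≤ f.denom.natDegree)


/-! ### Evaluation subrings -/

lemma eval_ne_of_dvd {x : TF} {q : ℝ[X]} {z : ℂ} (h : x.denom ∣ q)
    (hq : (q.map φc).eval z ≠ 0) : (x.denom.map φc).eval z ≠ 0 := by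
  intro h0
  obtain ⟨c, hc⟩ := h
  exact hq (by rw [hc, Polynomial.map_mul, Polynomial.eval_mul, h0, zero_mul])

/-- the subring of rational functions with no pole at `z` -/
def polesub (z : ℂ) : Subring TF where
  carrier := {f | (f.denom.map φc).eval z ≠ 0}
  one_mem' := by simp [Set.mem_setOf_eq]
  zero_mem' := by simp [Set.mem_setOf_eq]
  add_mem' := by
    intro a b ha hb
    refine eval_ne_of_dvd (RatFunc.denom_add_dvd a b) ?_
    rw [Polynomial.map_mul, Polynomial.eval_mul]
    exact mul_ne_zero ha hb
  neg_mem' := by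
    intro a ha
    have h : (-a).denom ∣ a.denom := by
      have := RatFunc.denom_mul_dvd (-1 : TF) a
      have h1 : (-1 : TF) * a = -a := by ring
      have h2 : (-1 : TF) = algebraMap ℝ[X] TF (-1) := by simp
      rw [h1, h2, RatFunc.denom_algebraMap] at this
      simpa using this
    exact eval_ne_of_dvd h ha
  mul_mem' := by
    intro a b ha hb
    refine eval_ne_of_dvd (RatFunc.denom_mul_dvd a b) ?_
    rw [Polynomial.map_mul, Polynomial.eval_mul]
    exact mul_ne_zero ha hb

lemma mem_polesub {z : ℂ} {f : TF} : f ∈ polesub z ↔ (f.denom.map φc).eval z ≠ 0 :=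
  Iff.rfl

lemma eval2_ne {z : ℂ} {f : TF} (h : f ∈ polesub z) :
    Polynomial.eval₂ φc z f.denom ≠ 0 := by
  rwa [← Polynomial.eval_map]

/-- evaluation at a non-pole, as a ring hom on `polesub z` -/
def evalHom (z : ℂ) : polesub z →+* ℂ where
  toFun f := RatFunc.eval φc z (f : TF)
  map_one' := by simp
  map_zero' := by simp
  map_add' a b := by
    show RatFunc.eval φc z ((a : TF) + (b : TF)) = RatFunc.eval φc z (a : TF) + RatFunc.eval φc z (b : TF)
    exact RatFunc.eval_add (f := φc) (a := z) (eval2_ne a.2) (eval2_ne b.2)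
  map_mul' a b := by
    show RatFunc.eval φc z ((a : TF) * (b : TF)) = RatFunc.eval φc z (a : TF) * RatFunc.eval φc z (b : TF)
    exact RatFunc.eval_mul (f := φc) (a := z) (eval2_ne a.2) (eval2_ne b.2)

lemma evalTF_eq (f : TF) (z : ℂ) : evalTF f z = RatFunc.eval φc z f := by
  simp [evalTF, RatFunc.eval, Polynomial.eval_map]

lemma stable_mem_polesub {f : TF} (hf : StableTF f) {z : ℂ} (hz : 1 ≤ ‖z‖) :
    f ∈ polesub z := by
  intro h0
  exact absurd (hf z h0) (not_lt.mpr hz)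

/-- determinant evaluation for a matrix of non-pole entries -/
lemma det_eval {k : ℕ} (F : Matrix (Fin k) (Fin k) TF) (z : ℂ)
    (hF : ∀ i j, F i j ∈ polesub z) :
    evalTF F.det z = (evalMat F z).det ∧ F.det ∈ polesub z := by
  let F' : Matrix (Fin k) (Fin k) (polesub z) := fun i j => ⟨F i j, hF i j⟩
  have hdet : F.det = ((F'.det : polesub z) : TF) := by
    have h1 : (polesub z).subtype F'.det = (F'.map ((polesub z).subtype)).det :=
      RingHom.map_det _ _
    have h2 : F'.map ((polesub z).subtype) = F := by ext i j; rfl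
    rw [h2] at h1
    exact h1.symm
  constructor
  · have h3 : evalHom z F'.det = (F'.map (evalHom z)).det := RingHom.map_det _ _
    have h4 : F'.map (evalHom z) = evalMat F z := by
      ext i j
      show RatFunc.eval φc z (F i j) = evalTF (F i j) z
      exact (evalTF_eq (F i j) z).symm
    rw [h4] at h3
    rw [hdet, evalTF_eq]
    exact h3
  · rw [hdet]
    exact (F'.det).2

/-- the RH∞ subring -/
def RHsub : Subring TF where
  carrier := {f | MemRHinfTF f}
  one_mem' := memRH_one
  zero_mem' := memRH_zero
  add_mem' ha hb := memRH_add ha hb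
  neg_mem' ha := memRH_neg ha
  mul_mem' ha hb := memRH_mul ha hb

lemma det_memRH {k : ℕ} (F : Matrix (Fin k) (Fin k) TF)
    (hF : ∀ i j, MemRHinfTF (F i j)) : MemRHinfTF F.det := by
  let F' : Matrix (Fin k) (Fin k) RHsub := fun i j => ⟨F i j, hF i j⟩
  have h1 : RHsub.subtype F'.det = (F'.map (RHsub.subtype)).det := RingHom.map_det _ _
  have h2 : F'.map (RHsub.subtype) = F := by ext i j; rfl
  rw [h2] at h1
  rw [← h1]
  exact (F'.det).2

lemma adjugate_memRH {k : ℕ} (F : Matrix (Fin k) (Fin k) TF)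
    (hF : ∀ i j, MemRHinfTF (F i j)) : ∀ i j, MemRHinfTF (F.adjugate i j) := by
  let F' : Matrix (Fin k) (Fin k) RHsub := fun i j => ⟨F i j, hF i j⟩
  have h1 := RingHom.map_adjugate (RHsub.subtype) F'
  have h2 : RHsub.subtype.mapMatrix F' = F := by ext i j; rfl
  rw [h2] at h1
  intro i j
  have : F.adjugate i j = ((F'.adjugate i j : RHsub) : TF) := by
    rw [← h1]; rfl
  rw [this]
  exact (F'.adjugate i j).2


/-! ### The flipped (z ↦ 1/w) picture -/

def Pc (f : TF) : ℂ[X] := f.num.map φc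
def Qc (f : TF) : ℂ[X] := f.denom.map φc
def kc (f : TF) : ℕ := (Qc f).natDegree - (Pc f).natDegree

/-- `f(1/w)` expressed via the reversed polynomials: a function holomorphic on the
closed unit disk when `f` is proper and stable. -/
def flipTF (f : TF) (w : ℂ) : ℂ :=
  ((Pc f).reverse.eval w * w ^ kc f) / ((Qc f).reverse.eval w)

lemma Qc_ne (f : TF) : Qc f ≠ 0 :=
  Polynomial.map_ne_zero (RatFunc.denom_ne_zero f)

lemma rev_eval (P : ℂ[X]) {w : ℂ} (hw : w ≠ 0) :
    P.reverse.eval w = P.eval w⁻¹ * w ^ P.natDegree := by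
  have : Invertible (w⁻¹) := invertibleOfNonzero (inv_ne_zero hw)
  have h := Polynomial.eval₂_reverse_mul_pow (RingHom.id ℂ) w⁻¹ P
  rw [invOf_eq_inv, inv_inv] at h
  rw [Polynomial.eval₂_eq_eval_map, Polynomial.map_id] at h
  rw [Polynomial.eval₂_eq_eval_map, Polynomial.map_id] at h
  have h2 : (w⁻¹ : ℂ) ^ P.natDegree * w ^ P.natDegree = 1 := by
    rw [← mul_pow, inv_mul_cancel₀ hw, one_pow]
  calc P.reverse.eval w = P.reverse.eval w * ((w⁻¹) ^ P.natDegree * w ^ P.natDegree) := by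
        rw [h2, mul_one]
    _ = (P.reverse.eval w * (w⁻¹) ^ P.natDegree) * w ^ P.natDegree := by ring
    _ = P.eval w⁻¹ * w ^ P.natDegree := by rw [h]

lemma evalTF_def (f : TF) (z : ℂ) : evalTF f z = (Pc f).eval z / (Qc f).eval z := rfl

lemma natDeg_le {f : TF} (hf : ProperTF f) : (Pc f).natDegree ≤ (Qc f).natDegree := by
  apply Polynomial.natDegree_le_natDegree
  rw [Pc, Qc, Polynomial.degree_map_eq_of_injective (algebraMap ℝ ℂ).injective,
    Polynomial.degree_map_eq_of_injective (algebraMap ℝ ℂ).injective]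
  exact hf

lemma flipTF_eq {f : TF} (hf : ProperTF f) {w : ℂ} (hw : w ≠ 0)
    (hden : (Qc f).eval w⁻¹ ≠ 0) : flipTF f w = evalTF f w⁻¹ := by
  rw [flipTF, evalTF_def]
  by_cases hP : Pc f = 0
  · rw [hP]; simp
  · rw [rev_eval _ hw, rev_eval _ hw]
    have hk : (Pc f).natDegree + kc f = (Qc f).natDegree := by
      have := natDeg_le hf; rw [kc]; omega
    rw [div_eq_div_iff (mul_ne_zero hden (pow_ne_zero _ hw)) hden]
    calc (Pc f).eval w⁻¹ * w ^ (Pc f).natDegree * w ^ kc f * (Qc f).eval w⁻¹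
        = ((Pc f).eval w⁻¹ * (Qc f).eval w⁻¹) * (w ^ (Pc f).natDegree * w ^ kc f) := by ring
      _ = ((Pc f).eval w⁻¹ * (Qc f).eval w⁻¹) * w ^ (Qc f).natDegree := by
          rw [← pow_add, hk]
      _ = (Pc f).eval w⁻¹ * ((Qc f).eval w⁻¹ * w ^ (Qc f).natDegree) := by ring

lemma stable_eval_ne {f : TF} (hf : StableTF f) {z : ℂ} (hz : 1 ≤ ‖z‖) :
    (Qc f).eval z ≠ 0 := fun h0 => absurd (hf z h0) (not_lt.mpr hz)

lemma rev_Qc_ne {f : TF} (hf : StableTF f) {w : ℂ} (hw : ‖w‖ ≤ 1) :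
    (Qc f).reverse.eval w ≠ 0 := by
  by_cases h0 : w = 0
  · rw [h0, ← Polynomial.coeff_zero_eq_eval_zero, Polynomial.coeff_zero_reverse]
    exact Polynomial.leadingCoeff_ne_zero.mpr (Qc_ne f)
  · rw [rev_eval _ h0]
    have hz : 1 ≤ ‖w⁻¹‖ := by
      rw [norm_inv]
      exact one_le_inv_iff₀.mpr ⟨norm_pos_iff.mpr h0, hw⟩
    exact mul_ne_zero (stable_eval_ne hf hz) (pow_ne_zero _ h0)

lemma flipTF_differentiableAt {f : TF} (hf : StableTF f) {w : ℂ} (hw : ‖w‖ ≤ 1) :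
    DifferentiableAt ℂ (flipTF f) w := by
  apply DifferentiableAt.div
  · exact (Polynomial.differentiableAt _).mul (differentiableAt_pow _)
  · exact Polynomial.differentiableAt _
  · exact rev_Qc_ne hf hw


/-! ### Small-gain: entries of `(1 + Δ)⁻¹` are in RH∞ -/

open Metric Set

lemma specNorm_continuous (m k : ℕ) :
    Continuous fun M : Matrix (Fin m) (Fin k) ℂ => specNorm M := by
  have hT := (Matrix.toEuclideanLin.trans
    (LinearMap.toContinuousLinearMap (𝕜 := ℂ) (E := EuclideanSpace ℂ (Fin k))
      (F' := EuclideanSpace ℂ (Fin m)))).toLinearMap.continuous_of_finiteDimensional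
  have heq : (fun M : Matrix (Fin m) (Fin k) ℂ => specNorm M) = fun M =>
      ‖(Matrix.toEuclideanLin.trans LinearMap.toContinuousLinearMap).toLinearMap M‖ := rfl
  rw [heq]
  exact continuous_norm.comp hT

lemma evalMat_continuousOn {m k : ℕ} (Δ : TMat m k) (hΔ : MemRHinf Δ) :
    ContinuousOn (fun z => evalMat Δ z) (sphere (0:ℂ) 1) := by
  apply continuousOn_pi.mpr; intro i; apply continuousOn_pi.mpr; intro j
  have hne : ∀ z ∈ sphere (0:ℂ) 1, (Qc (Δ i j)).eval z ≠ 0 := fun z hz =>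
    stable_eval_ne (hΔ i j).2 (le_of_eq (mem_sphere_zero_iff_norm.mp hz).symm)
  exact ContinuousOn.div (Polynomial.continuous _).continuousOn
    (Polynomial.continuous _).continuousOn hne

lemma pointwise_le_hinf {n : ℕ} (Δ : TMat n n) (hΔ : MemRHinf Δ) :
    ∀ z : ℂ, ‖z‖ = 1 → specNorm (evalMat Δ z) ≤ hinfNorm Δ := by
  have himg : {x : ℝ | ∃ z : ℂ, ‖z‖ = 1 ∧ x = specNorm (evalMat Δ z)} =
      (fun z => specNorm (evalMat Δ z)) '' (sphere (0:ℂ) 1) := by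
    ext x
    constructor
    · rintro ⟨z, hz, rfl⟩
      exact ⟨z, by rwa [mem_sphere_zero_iff_norm], rfl⟩
    · rintro ⟨z, hz, rfl⟩
      exact ⟨z, by rwa [← mem_sphere_zero_iff_norm], rfl⟩
  have hcomp : IsCompact ((fun z => specNorm (evalMat Δ z)) '' (sphere (0:ℂ) 1)) :=
    (isCompact_sphere (0:ℂ) 1).image_of_continuousOn
      ((specNorm_continuous n n).comp_continuousOn (evalMat_continuousOn Δ hΔ))
  intro z hz
  apply le_csSup
  · rw [himg]; exact hcomp.bddAbove
  · exact ⟨z, hz, rfl⟩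

lemma hinf_nonneg {n : ℕ} (Δ : TMat n n) (hΔ : MemRHinf Δ) : 0 ≤ hinfNorm Δ :=
  le_trans (norm_nonneg _) (pointwise_le_hinf Δ hΔ 1 (by simp))

set_option synthInstance.maxHeartbeats 1000000 in
set_option maxHeartbeats 1600000 in
lemma small_gain {n : ℕ} (Δ : TMat n n) (hΔ : MemRHinf Δ) (hsmall : hinfNorm Δ < 1) :
    MemRHinf ((1 + Δ : TMat n n)⁻¹) ∧ IsUnit (1 + Δ : TMat n n).det := by
  classical
  set c := hinfNorm Δ with hc
  have hb := pointwise_le_hinf Δ hΔ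
  have hc0 : 0 ≤ c := hinf_nonneg Δ hΔ
  set Φ : ℂ → Matrix (Fin n) (Fin n) ℂ :=
    fun w => Matrix.of fun i j => flipTF (Δ i j) w with hΦdef
  have hΦsphere : ∀ w : ℂ, w ≠ 0 → 1 ≤ ‖w⁻¹‖ → Φ w = evalMat Δ w⁻¹ := by
    intro w hw h1
    ext i j
    exact flipTF_eq (hΔ i j).1 hw (stable_eval_ne (hΔ i j).2 h1)
  -- pointwise operator bound via maximum modulus
  have key : ∀ w ∈ closedBall (0:ℂ) 1, ∀ v : EuclideanSpace ℂ (Fin n),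
      ‖Matrix.toEuclideanLin (Φ w) v‖ ≤ c * ‖v‖ := by
    intro w hw v
    by_cases hv0 : Matrix.toEuclideanLin (Φ w) v = 0
    · rw [hv0, norm_zero]; positivity
    obtain ⟨ℓ, hℓ1, hℓx⟩ := exists_dual_vector ℂ _ (norm_ne_zero_iff.mpr hv0)
    set X : ℂ → EuclideanSpace ℂ (Fin n) := fun u => Matrix.toEuclideanLin (Φ u) v with hX
    have hXdiff : ∀ u ∈ closedBall (0:ℂ) 1, DifferentiableAt ℂ X u := by
      intro u hu
      rw [mem_closedBall, dist_zero_right] at hu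
      have hY : DifferentiableAt ℂ
          (fun u => (Φ u).mulVec ((WithLp.equiv 2 (Fin n → ℂ)) v)) u := by
        apply differentiableAt_pi.mpr
        intro i
        simp only [Matrix.mulVec, dotProduct]
        apply DifferentiableAt.fun_sum
        intro j _
        exact ((flipTF_differentiableAt (hΔ i j).2 hu).mul (differentiableAt_const _))
      have h2 := ((EuclideanSpace.equiv (Fin n) ℂ).symm.toContinuousLinearMap.differentiableAt
        (x := (Φ u).mulVec ((WithLp.equiv 2 (Fin n → ℂ)) v))).comp u hY
      apply h2.congr_of_eventuallyEq
      filter_upwards with u'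
      show Matrix.toEuclideanLin (Φ u') v = _
      rw [Matrix.toEuclideanLin_apply]
      rfl
    have hhdiff : ∀ u ∈ closedBall (0:ℂ) 1, DifferentiableAt ℂ (fun u => ℓ (X u)) u :=
      fun u hu => (ℓ.differentiableAt).comp u (hXdiff u hu)
    have hDCC : DiffContOnCl ℂ (fun u => ℓ (X u)) (ball (0:ℂ) 1) := by
      refine ⟨fun u hu =>
        (hhdiff u (ball_subset_closedBall hu)).differentiableWithinAt, ?_⟩
      intro u hu
      rw [closure_ball (0:ℂ) one_ne_zero] at hu
      exact (hhdiff u hu).continuousAt.continuousWithinAt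
    have hbound : ∀ u ∈ frontier (ball (0:ℂ) 1), ‖ℓ (X u)‖ ≤ c * ‖v‖ := by
      intro u hu
      rw [frontier_ball (0:ℂ) one_ne_zero] at hu
      have hu1 : ‖u‖ = 1 := mem_sphere_zero_iff_norm.mp hu
      have hu0 : u ≠ 0 := by intro h; rw [h, norm_zero] at hu1; norm_num at hu1
      have huinv : ‖u⁻¹‖ = 1 := by rw [norm_inv, hu1, inv_one]
      have h1 : ‖X u‖ ≤ specNorm (Φ u) * ‖v‖ := by
        have h2 := (LinearMap.toContinuousLinearMap
          (Matrix.toEuclideanLin (Φ u))).le_opNorm v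
        have h3 : (LinearMap.toContinuousLinearMap (Matrix.toEuclideanLin (Φ u))) v
            = X u := rfl
        rw [h3] at h2
        exact h2
      have h3 : specNorm (Φ u) ≤ c := by
        rw [hΦsphere u hu0 (le_of_eq huinv.symm)]
        exact hb u⁻¹ huinv
      calc ‖ℓ (X u)‖ ≤ ‖ℓ‖ * ‖X u‖ := ℓ.le_opNorm _
        _ = ‖X u‖ := by rw [hℓ1, one_mul]
        _ ≤ specNorm (Φ u) * ‖v‖ := h1
        _ ≤ c * ‖v‖ := mul_le_mul_of_nonneg_right h3 (norm_nonneg v)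
    have hfin : ‖ℓ (X w)‖ ≤ c * ‖v‖ :=
      Complex.norm_le_of_forall_mem_frontier_norm_le isBounded_ball hDCC hbound
        (by rwa [closure_ball (0:ℂ) one_ne_zero])
    have hℓx' : ℓ (X w) = ((‖X w‖ : ℝ) : ℂ) := hℓx
    calc ‖X w‖ = ‖((‖X w‖ : ℝ) : ℂ)‖ := by
          rw [Complex.norm_real, Real.norm_eq_abs, abs_of_nonneg (norm_nonneg _)]
      _ = ‖ℓ (X w)‖ := by rw [hℓx']
      _ ≤ c * ‖v‖ := hfin
  -- determinant of `1 + Φ w` does not vanish on the closed disk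
  have hdetΦ : ∀ w ∈ closedBall (0:ℂ) 1, (1 + Φ w).det ≠ 0 := by
    intro w hw h0
    obtain ⟨v, hv0, hv⟩ := Matrix.exists_mulVec_eq_zero_iff.mpr h0
    have hminus : (Φ w).mulVec v = -v := by
      have h1 : (Φ w).mulVec v + v = 0 := by
        have h2 := hv
        rw [Matrix.add_mulVec, Matrix.one_mulVec] at h2
        rwa [add_comm] at h2
      exact eq_neg_of_add_eq_zero_left h1
    set V : EuclideanSpace ℂ (Fin n) := (WithLp.equiv 2 (Fin n → ℂ)).symm v with hV
    have hVnorm : ‖Matrix.toEuclideanLin (Φ w) V‖ = ‖V‖ := by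
      rw [hV, show Matrix.toEuclideanLin (Φ w) ((WithLp.equiv 2 (Fin n → ℂ)).symm v) =
          (WithLp.equiv 2 (Fin n → ℂ)).symm ((Φ w).mulVec v) from rfl, hminus]
      have h3 : (WithLp.equiv 2 (Fin n → ℂ)).symm (-v) =
          -((WithLp.equiv 2 (Fin n → ℂ)).symm v) := rfl
      rw [h3, norm_neg]
    have hVpos : 0 < ‖V‖ := by
      rw [norm_pos_iff]
      intro h
      apply hv0
      have h4 := congrArg (WithLp.equiv 2 (Fin n → ℂ)) h
      exact h4
    have h5 := key w hw V
    rw [hVnorm] at h5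
    nlinarith
  -- no zeros of `det (1 + Δ)` outside the open disk
  have hFmem : ∀ i j, MemRHinfTF ((1 + Δ : TMat n n) i j) := by
    intro i j
    by_cases h : i = j
    · subst h
      have h1 : (1 + Δ : TMat n n) i i = 1 + Δ i i := by
        simp [Matrix.add_apply, Matrix.one_apply]
      rw [h1]
      exact memRH_add memRH_one (hΔ i i)
    · have h1 : (1 + Δ : TMat n n) i j = Δ i j := by
        simp [Matrix.add_apply, Matrix.one_apply, h]
      rw [h1]
      exact hΔ i j
  have hd : MemRHinfTF (1 + Δ : TMat n n).det := det_memRH _ hFmem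
  have hEm : ∀ z : ℂ, 1 ≤ ‖z‖ → evalMat (1 + Δ : TMat n n) z = 1 + evalMat Δ z := by
    intro z hz
    ext i j
    show evalTF ((1 + Δ : TMat n n) i j) z = (1 + evalMat Δ z) i j
    by_cases h : i = j
    · subst h
      have h1 : (1 + Δ : TMat n n) i i = 1 + Δ i i := by
        simp [Matrix.add_apply, Matrix.one_apply]
      have h2 : (1 + evalMat Δ z) i i = 1 + evalTF (Δ i i) z := by
        simp [Matrix.add_apply, Matrix.one_apply, evalMat]
      rw [h1, h2, evalTF_eq, evalTF_eq]
      rw [RatFunc.eval_add (f := φc) (a := z) (by simp)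
        (eval2_ne (stable_mem_polesub (hΔ i i).2 hz))]
      simp
    · have h1 : (1 + Δ : TMat n n) i j = Δ i j := by
        simp [Matrix.add_apply, Matrix.one_apply, h]
      have h2 : (1 + evalMat Δ z) i j = evalTF (Δ i j) z := by
        simp [Matrix.add_apply, Matrix.one_apply, h, evalMat]
      rw [h1, h2]
  have hdvalue : ∀ z : ℂ, 1 ≤ ‖z‖ → evalTF (1 + Δ : TMat n n).det z ≠ 0 := by
    intro z hz
    rw [(det_eval (1 + Δ : TMat n n) z
      (fun i j => stable_mem_polesub (hFmem i j).2 hz)).1, hEm z hz]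
    -- goal : (1 + evalMat Δ z).det ≠ 0
    have hz0 : z ≠ 0 := by
      intro h
      rw [h, norm_zero] at hz
      norm_num at hz
    have hwball : z⁻¹ ∈ closedBall (0:ℂ) 1 := by
      rw [mem_closedBall, dist_zero_right, norm_inv]
      exact inv_le_one_of_one_le₀ hz
    have h6 := hdetΦ z⁻¹ hwball
    rwa [hΦsphere z⁻¹ (inv_ne_zero hz0) (by rwa [inv_inv]), inv_inv] at h6
  have hdne : (1 + Δ : TMat n n).det ≠ 0 := by
    intro h0
    apply hdvalue 1 (by norm_num)
    rw [h0]
    simp [evalTF]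
  -- `det (1 + Δ)` is not strictly proper
  have hnotsp : ¬ StrictlyProperTF (1 + Δ : TMat n n).det := by
    intro hsp
    have hnum0 : (1 + Δ : TMat n n).det.num ≠ 0 := RatFunc.num_ne_zero hdne
    have hk1 : kc (1 + Δ : TMat n n).det ≠ 0 := by
      have h1 : (Pc (1 + Δ : TMat n n).det).natDegree <
          (Qc (1 + Δ : TMat n n).det).natDegree := by
        apply Polynomial.natDegree_lt_natDegree (Polynomial.map_ne_zero hnum0)
        simp only [Pc, Qc]
        rw [Polynomial.degree_map_eq_of_injective (algebraMap ℝ ℂ).injective,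
          Polynomial.degree_map_eq_of_injective (algebraMap ℝ ℂ).injective]
        exact hsp
      rw [kc]
      omega
    have hDcont : ContinuousAt (fun w => (1 + Φ w).det) 0 := by
      have hmat : ContinuousAt (fun w => 1 + Φ w) 0 := by
        apply continuousAt_pi.mpr
        intro i
        apply continuousAt_pi.mpr
        intro j
        exact continuousAt_const.add
          ((flipTF_differentiableAt (hΔ i j).2 (by simp)).continuousAt)
      exact ContinuousAt.comp
        ((continuous_id.matrix_det).continuousAt) hmat
    have hg0 : flipTF (1 + Δ : TMat n n).det 0 = 0 := by
      rw [flipTF, zero_pow hk1, mul_zero, zero_div]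
    have hgcont : ContinuousAt (flipTF (1 + Δ : TMat n n).det) 0 :=
      (flipTF_differentiableAt hd.2 (by simp)).continuousAt
    have heq : (fun w => (1 + Φ w).det) =ᶠ[nhdsWithin (0:ℂ) {(0:ℂ)}ᶜ]
        flipTF (1 + Δ : TMat n n).det := by
      have hball : Metric.ball (0:ℂ) 1 ∈ nhds (0:ℂ) := Metric.ball_mem_nhds _ one_pos
      filter_upwards [mem_nhdsWithin_of_mem_nhds hball, self_mem_nhdsWithin] with w hw hw0
      have hwn : ‖w‖ < 1 := by rwa [mem_ball, dist_zero_right] at hw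
      have hw0' : w ≠ 0 := hw0
      have hzinv : 1 ≤ ‖w⁻¹‖ := by
        rw [norm_inv]
        exact one_le_inv_iff₀.mpr ⟨norm_pos_iff.mpr hw0', le_of_lt hwn⟩
      calc (1 + Φ w).det = (1 + evalMat Δ w⁻¹).det := by rw [hΦsphere w hw0' hzinv]
        _ = evalTF (1 + Δ : TMat n n).det w⁻¹ := by
            rw [(det_eval (1 + Δ : TMat n n) w⁻¹
              (fun i j => stable_mem_polesub (hFmem i j).2 hzinv)).1, hEm w⁻¹ hzinv]
        _ = flipTF (1 + Δ : TMat n n).det w :=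
            (flipTF_eq hd.1 hw0' (stable_eval_ne hd.2 hzinv)).symm
    have huniq : (1 + Φ (0:ℂ)).det = flipTF (1 + Δ : TMat n n).det 0 := by
      have h1 : Filter.Tendsto (fun w => (1 + Φ w).det) (nhdsWithin (0:ℂ) {(0:ℂ)}ᶜ)
          (nhds ((1 + Φ (0:ℂ)).det)) := hDcont.continuousWithinAt
      have h2 : Filter.Tendsto (flipTF (1 + Δ : TMat n n).det)
          (nhdsWithin (0:ℂ) {(0:ℂ)}ᶜ)
          (nhds (flipTF (1 + Δ : TMat n n).det 0)) := hgcont.continuousWithinAt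
      exact tendsto_nhds_unique (h1.congr' heq) h2
    apply hdetΦ 0 (by simp)
    rw [huniq, hg0]
  -- inverse of the determinant is in RH∞
  have hdeg_eq : (1 + Δ : TMat n n).det.denom.degree ≤ (1 + Δ : TMat n n).det.num.degree :=
    not_lt.mp hnotsp
  have hnum0 : (1 + Δ : TMat n n).det.num ≠ 0 := RatFunc.num_ne_zero hdne
  have hrepinv : (1 + Δ : TMat n n).det⁻¹ * ζ (1 + Δ : TMat n n).det.num =
      ζ (1 + Δ : TMat n n).det.denom := by
    have h1 := rep_self (1 + Δ : TMat n n).det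
    have h2 : (1 + Δ : TMat n n).det⁻¹ * ((1 + Δ : TMat n n).det *
        ζ (1 + Δ : TMat n n).det.denom) =
        (1 + Δ : TMat n n).det⁻¹ * ζ (1 + Δ : TMat n n).det.num := by rw [h1]
    rw [← mul_assoc, inv_mul_cancel₀ hdne, one_mul] at h2
    exact h2.symm
  have hdinv : MemRHinfTF (1 + Δ : TMat n n).det⁻¹ := by
    refine ⟨proper_of_rep hnum0 hrepinv hdeg_eq, stable_of_rep hnum0 hrepinv ?_⟩
    intro z hz
    by_contra hge
    push_neg at hge
    apply hdvalue z hge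
    rw [evalTF_def, show (Pc (1 + Δ : TMat n n).det).eval z = 0 from hz, zero_div]
  have hunit : IsUnit (1 + Δ : TMat n n).det := isUnit_iff_ne_zero.mpr hdne
  refine ⟨?_, hunit⟩
  intro i j
  rw [Matrix.inv_def]
  have hring : Ring.inverse (1 + Δ : TMat n n).det = (1 + Δ : TMat n n).det⁻¹ :=
    Ring.inverse_eq_inv _
  rw [hring, Matrix.smul_apply, smul_eq_mul]
  exact memRH_mul hdinv (adjugate_memRH _ hFmem i j)


/-! ### Matrix-level closure and the achieved response -/

lemma memRH_entry_mul {a b c : ℕ} {X : TMat a b} {Y : TMat b c}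
    (hX : MemRHinf X) (hY : MemRHinf Y) : MemRHinf (X * Y) := by
  intro i j
  rw [Matrix.mul_apply]
  exact memRH_sum _ _ fun k _ => memRH_mul (hX i k) (hY k j)

lemma sps_entry_mul {a b c : ℕ} {X : TMat a b} {Y : TMat b c}
    (hX : MemRHinf X) (hY : ∀ i j, SPS (Y i j)) : ∀ i j, SPS ((X * Y) i j) := by
  intro i j
  rw [Matrix.mul_apply]
  exact sps_sum _ _ fun k _ => sps_mul (hX i k) (hY k j)

lemma rmap_memRH {a b : ℕ} (A : Matrix (Fin a) (Fin b) ℝ) : MemRHinf (rmap A) := by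
  intro i j
  show MemRHinfTF (A.map RatFunc.C i j)
  rw [Matrix.map_apply]
  exact memRH_C _

lemma delta2_memRH {n p q : ℕ} {A : Matrix (Fin n) (Fin n) ℝ}
    {C₂ : Matrix (Fin q) (Fin n) ℝ} {M : TMat p n} {L : TMat p q}
    (hM : ∀ i j, SPS (M i j)) (hL : MemRHinf L) :
    MemRHinf (M * zIA A - L * rmap C₂) := by
  intro i j
  rw [Matrix.sub_apply]
  refine memRH_sub ?_ (memRH_entry_mul hL (rmap_memRH C₂) i j)
  rw [zIA, Matrix.mul_sub, Matrix.sub_apply]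
  refine memRH_sub ?_ (memRH_entry_mul (fun a b => sps_memRH (hM a b)) (rmap_memRH A) i j)
  rw [Matrix.mul_diagonal]
  exact sps_mul_X (hM i j)

set_option maxHeartbeats 1600000 in
lemma achieves_alg {n p q : ℕ} (A : Matrix (Fin n) (Fin n) ℝ)
    (B₂ : Matrix (Fin n) (Fin p) ℝ) (C₂ : Matrix (Fin q) (Fin n) ℝ)
    (Δ₁ : TMat n n) (Δ₂ : TMat p n) (Θ : Response n p q)
    (c1 : zIA A * Θ.R - rmap B₂ * Θ.M = 1)
    (c2 : zIA A * Θ.N - rmap B₂ * Θ.L = 0)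
    (c3 : Θ.R * zIA A - Θ.N * rmap C₂ = 1 + Δ₁)
    (c4 : Θ.M * zIA A - Θ.L * rmap C₂ = Δ₂)
    (hR : IsUnit Θ.R.det) (hF : IsUnit (1 + Δ₁).det) :
    Achieves A B₂ C₂ (controller Θ) (deltaPerturb Δ₁ Δ₂ Θ) := by
  have hFG : (1 + Δ₁) * (1 + Δ₁)⁻¹ = 1 := Matrix.mul_nonsing_inv _ hF
  have hRinv : Θ.R⁻¹ * Θ.R = 1 := Matrix.nonsing_inv_mul _ hR
  set G := (1 + Δ₁)⁻¹ with hG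
  have hBM : rmap B₂ * Θ.M = zIA A * Θ.R - 1 := by rw [← c1]; (try simp only [Matrix.mul_sub, Matrix.sub_mul, Matrix.mul_add, Matrix.add_mul, Matrix.mul_assoc, Matrix.one_mul, Matrix.mul_one]); (try abel)
  have hBL : rmap B₂ * Θ.L = zIA A * Θ.N := (sub_eq_zero.mp c2).symm
  have hGone : 1 - Δ₁ * G = G := by
    have h1 : Δ₁ * G = (1 + Δ₁) * G - G := by (try simp only [Matrix.mul_sub, Matrix.sub_mul, Matrix.mul_add, Matrix.add_mul, Matrix.mul_assoc, Matrix.one_mul, Matrix.mul_one]); (try abel)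
    rw [h1, hFG]
    (try simp only [Matrix.mul_sub, Matrix.sub_mul, Matrix.mul_add, Matrix.add_mul, Matrix.mul_assoc, Matrix.one_mul, Matrix.mul_one]); (try abel)
  have hstar : rmap B₂ * Δ₂ = zIA A * Δ₁ := by
    calc rmap B₂ * Δ₂ = rmap B₂ * (Θ.M * zIA A - Θ.L * rmap C₂) := by rw [c4]
      _ = (rmap B₂ * Θ.M) * zIA A - (rmap B₂ * Θ.L) * rmap C₂ := by (try simp only [Matrix.mul_sub, Matrix.sub_mul, Matrix.mul_add, Matrix.add_mul, Matrix.mul_assoc, Matrix.one_mul, Matrix.mul_one]); (try abel)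
      _ = (zIA A * Θ.R - 1) * zIA A - (zIA A * Θ.N) * rmap C₂ := by rw [hBM, hBL]
      _ = zIA A * (Θ.R * zIA A - Θ.N * rmap C₂) - zIA A := by (try simp only [Matrix.mul_sub, Matrix.sub_mul, Matrix.mul_add, Matrix.add_mul, Matrix.mul_assoc, Matrix.one_mul, Matrix.mul_one]); (try abel)
      _ = zIA A * (1 + Δ₁) - zIA A := by rw [c3]
      _ = zIA A * Δ₁ := by (try simp only [Matrix.mul_sub, Matrix.sub_mul, Matrix.mul_add, Matrix.add_mul, Matrix.mul_assoc, Matrix.one_mul, Matrix.mul_one]); (try abel)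
  have hNC : Θ.N * rmap C₂ = Θ.R * zIA A - (1 + Δ₁) := by rw [← c3]; (try simp only [Matrix.mul_sub, Matrix.sub_mul, Matrix.mul_add, Matrix.add_mul, Matrix.mul_assoc, Matrix.one_mul, Matrix.mul_one]); (try abel)
  refine ⟨?_, ?_, ?_, ?_⟩
  · show zIA A * (G * Θ.R) = rmap B₂ * (Θ.M - Δ₂ * (G * Θ.R)) + 1
    symm
    calc rmap B₂ * (Θ.M - Δ₂ * (G * Θ.R)) + 1
        = rmap B₂ * Θ.M - (rmap B₂ * Δ₂) * (G * Θ.R) + 1 := by (try simp only [Matrix.mul_sub, Matrix.sub_mul, Matrix.mul_add, Matrix.add_mul, Matrix.mul_assoc, Matrix.one_mul, Matrix.mul_one]); (try abel)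
      _ = (zIA A * Θ.R - 1) - (zIA A * Δ₁) * (G * Θ.R) + 1 := by rw [hBM, hstar]
      _ = zIA A * ((1 - Δ₁ * G) * Θ.R) := by (try simp only [Matrix.mul_sub, Matrix.sub_mul, Matrix.mul_add, Matrix.add_mul, Matrix.mul_assoc, Matrix.one_mul, Matrix.mul_one]); (try abel)
      _ = zIA A * (G * Θ.R) := by rw [hGone]
  · show zIA A * (G * Θ.N) = rmap B₂ * (Θ.L - Δ₂ * (G * Θ.N))
    symm
    calc rmap B₂ * (Θ.L - Δ₂ * (G * Θ.N))
        = rmap B₂ * Θ.L - (rmap B₂ * Δ₂) * (G * Θ.N) := by (try simp only [Matrix.mul_sub, Matrix.sub_mul, Matrix.mul_add, Matrix.add_mul, Matrix.mul_assoc, Matrix.one_mul, Matrix.mul_one]); (try abel)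
      _ = zIA A * Θ.N - (zIA A * Δ₁) * (G * Θ.N) := by rw [hBL, hstar]
      _ = zIA A * ((1 - Δ₁ * G) * Θ.N) := by (try simp only [Matrix.mul_sub, Matrix.sub_mul, Matrix.mul_add, Matrix.add_mul, Matrix.mul_assoc, Matrix.one_mul, Matrix.mul_one]); (try abel)
      _ = zIA A * (G * Θ.N) := by rw [hGone]
  · show Θ.M - Δ₂ * (G * Θ.R) = controller Θ * rmap C₂ * (G * Θ.R)
    symm
    calc controller Θ * rmap C₂ * (G * Θ.R)
        = Θ.L * rmap C₂ * (G * Θ.R) -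
            Θ.M * (Θ.R⁻¹ * ((Θ.N * rmap C₂) * (G * Θ.R))) := by
          simp only [controller]
          (try simp only [Matrix.mul_sub, Matrix.sub_mul, Matrix.mul_add, Matrix.add_mul, Matrix.mul_assoc, Matrix.one_mul, Matrix.mul_one]); (try abel)
      _ = Θ.L * rmap C₂ * (G * Θ.R) -
            Θ.M * (Θ.R⁻¹ * ((Θ.R * zIA A - (1 + Δ₁)) * (G * Θ.R))) := by rw [hNC]
      _ = Θ.L * rmap C₂ * (G * Θ.R) - Θ.M * ((Θ.R⁻¹ * Θ.R) * (zIA A * (G * Θ.R)))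
            + Θ.M * (Θ.R⁻¹ * (((1 + Δ₁) * G) * Θ.R)) := by (try simp only [Matrix.mul_sub, Matrix.sub_mul, Matrix.mul_add, Matrix.add_mul, Matrix.mul_assoc, Matrix.one_mul, Matrix.mul_one]); (try abel)
      _ = Θ.L * rmap C₂ * (G * Θ.R) - Θ.M * (1 * (zIA A * (G * Θ.R)))
            + Θ.M * (Θ.R⁻¹ * (1 * Θ.R)) := by rw [hRinv, hFG]
      _ = Θ.L * rmap C₂ * (G * Θ.R) - Θ.M * (zIA A * (G * Θ.R))
            + Θ.M * (Θ.R⁻¹ * Θ.R) := by (try simp only [Matrix.mul_sub, Matrix.sub_mul, Matrix.mul_add, Matrix.add_mul, Matrix.mul_assoc, Matrix.one_mul, Matrix.mul_one]); (try abel)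
      _ = Θ.M - (Θ.M * zIA A - Θ.L * rmap C₂) * (G * Θ.R) := by
          rw [hRinv]
          (try simp only [Matrix.mul_sub, Matrix.sub_mul, Matrix.mul_add, Matrix.add_mul, Matrix.mul_assoc, Matrix.one_mul, Matrix.mul_one]); (try abel)
      _ = Θ.M - Δ₂ * (G * Θ.R) := by rw [c4]
  · show Θ.L - Δ₂ * (G * Θ.N) = controller Θ * rmap C₂ * (G * Θ.N) + controller Θ
    symm
    calc controller Θ * rmap C₂ * (G * Θ.N) + controller Θ
        = (Θ.L * rmap C₂ * (G * Θ.N) - Θ.M * (Θ.R⁻¹ * ((Θ.N * rmap C₂) * (G * Θ.N)))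
            + Θ.L - Θ.M * (Θ.R⁻¹ * Θ.N) : TMat p q) := by
          simp only [controller]
          (try simp only [Matrix.mul_sub, Matrix.sub_mul, Matrix.mul_add, Matrix.add_mul, Matrix.mul_assoc, Matrix.one_mul, Matrix.mul_one]); (try abel)
      _ = Θ.L * rmap C₂ * (G * Θ.N)
            - Θ.M * (Θ.R⁻¹ * ((Θ.R * zIA A - ((1 : TMat n n) + Δ₁)) * (G * Θ.N)))
            + Θ.L - Θ.M * (Θ.R⁻¹ * Θ.N) := by rw [hNC]
      _ = Θ.L * rmap C₂ * (G * Θ.N) - Θ.M * ((Θ.R⁻¹ * Θ.R) * (zIA A * (G * Θ.N)))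
            + Θ.M * (Θ.R⁻¹ * ((((1 : TMat n n) + Δ₁) * G) * Θ.N))
            + Θ.L - Θ.M * (Θ.R⁻¹ * Θ.N) := by (try simp only [Matrix.mul_sub, Matrix.sub_mul, Matrix.mul_add, Matrix.add_mul, Matrix.mul_assoc, Matrix.one_mul, Matrix.mul_one]); (try abel)
      _ = Θ.L * rmap C₂ * (G * Θ.N) - Θ.M * ((1 : TMat n n) * (zIA A * (G * Θ.N)))
            + Θ.M * (Θ.R⁻¹ * ((1 : TMat n n) * Θ.N))
            + Θ.L - Θ.M * (Θ.R⁻¹ * Θ.N) := by rw [hRinv, hFG]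
      _ = Θ.L - (Θ.M * zIA A - Θ.L * rmap C₂) * (G * Θ.N) := by (try simp only [Matrix.mul_sub, Matrix.sub_mul, Matrix.mul_add, Matrix.add_mul, Matrix.mul_assoc, Matrix.one_mul, Matrix.mul_one]); (try abel)
      _ = Θ.L - Δ₂ * (G * Θ.N) := by rw [c4]

end SLSProof

open SLSProof

/-- small-gain sufficient condition. Under the robust SLS constraints with
`Δ₁ ∈ RH∞`, `R̃` invertible and `‖Δ₁‖ < 1` in H∞ norm, the controller `K̃ = L̃ − M̃R̃⁻¹Ñ`
internally stabilizes `(A, B₂, C₂)` and achieves the perturbed response `Θ̂`. -/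
theorem statement_6 {n p q : ℕ} (A : Matrix (Fin n) (Fin n) ℝ)
    (B₂ : Matrix (Fin n) (Fin p) ℝ) (C₂ : Matrix (Fin q) (Fin n) ℝ)
    (Δ₁ : TMat n n) (Δ₂ : TMat p n) (Θ : Response n p q)
    (hrob : RobustSLSConstraints A B₂ C₂ Δ₁ Δ₂ Θ)
    (hΔ₁ : MemRHinf Δ₁)
    (hR : IsUnit Θ.R.det)
    (hsmall : hinfNorm Δ₁ < 1) :
    InternallyStabilizes A B₂ C₂ (controller Θ) ∧
      Achieves A B₂ C₂ (controller Θ) (deltaPerturb Δ₁ Δ₂ Θ) := by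
  obtain ⟨c1, c2, c3, c4, hstab⟩ := hrob
  obtain ⟨hRsp, hMsp, hNsp, hRrh, hMrh, hNrh, hLrh⟩ := hstab
  obtain ⟨hGmem, hFunit⟩ := small_gain Δ₁ hΔ₁ hsmall
  have hach := achieves_alg A B₂ C₂ Δ₁ Δ₂ Θ c1 c2 c3 c4 hR hFunit
  have hRsps : ∀ i j, SPS (Θ.R i j) := fun i j => ⟨hRsp i j, (hRrh i j).2⟩
  have hNsps : ∀ i j, SPS (Θ.N i j) := fun i j => ⟨hNsp i j, (hNrh i j).2⟩
  have hMsps : ∀ i j, SPS (Θ.M i j) := fun i j => ⟨hMsp i j, (hMrh i j).2⟩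
  have hRhat : ∀ i j, SPS (((1 + Δ₁)⁻¹ * Θ.R) i j) := sps_entry_mul hGmem hRsps
  have hNhat : ∀ i j, SPS (((1 + Δ₁)⁻¹ * Θ.N) i j) := sps_entry_mul hGmem hNsps
  have hΔ₂ : MemRHinf Δ₂ := by
    rw [← c4]
    exact delta2_memRH hMsps hLrh
  have hstab' : SLSStable (deltaPerturb Δ₁ Δ₂ Θ) := by
    refine ⟨?_, ?_, ?_, ?_, ?_, ?_, ?_⟩
    · exact fun i j => (hRhat i j).1
    · intro i j
      show StrictlyProperTF ((Θ.M - Δ₂ * ((1 + Δ₁)⁻¹ * Θ.R)) i j)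
      rw [Matrix.sub_apply]
      exact (sps_sub (hMsps i j) (sps_entry_mul hΔ₂ hRhat i j)).1
    · exact fun i j => (hNhat i j).1
    · exact fun i j => sps_memRH (hRhat i j)
    · intro i j
      show MemRHinfTF ((Θ.M - Δ₂ * ((1 + Δ₁)⁻¹ * Θ.R)) i j)
      rw [Matrix.sub_apply]
      exact memRH_sub (sps_memRH (hMsps i j)) (sps_memRH (sps_entry_mul hΔ₂ hRhat i j))
    · exact fun i j => sps_memRH (hNhat i j)
    · intro i j
      show MemRHinfTF ((Θ.L - Δ₂ * ((1 + Δ₁)⁻¹ * Θ.N)) i j)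
      rw [Matrix.sub_apply]
      exact memRH_sub (hLrh i j) (sps_memRH (sps_entry_mul hΔ₂ hNhat i j))
  exact ⟨⟨deltaPerturb Δ₁ Δ₂ Θ, hach, hstab'⟩, hach⟩
end
end
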